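/- arXiv:1610.06521 — 7 statements merged into one kernel-verified Lean document; each statement's English description precedes it below -/
import Mathlib

section
/- If G is a graph on n > 2·4^s vertices, then the number of s-cliques in G plus the number of s-cliques in the complement of G is at least n^s / (2^s · 4^{s^2}). -/
open SimpleGraph Finset

lemma myRamsey {V : Type*} [DecidableEq V] (H : SimpleGraph V) [DecidableRel H.Adj] :
    ∀ (k a b : ℕ), a + b = k → ∀ (A : Finset V), 2 ^ (a + b) ≤ A.card →
      ∃ T ⊆ A, (H.IsNClique a T ∨ Hᶜ.IsNClique b T) := by
  intro k
  induction k with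
  | zero =>
    intro a b hab A hA
    obtain rfl : a = 0 := by omega
    exact ⟨∅, empty_subset _, Or.inl (by simp [isNClique_empty])⟩
  | succ k ih =>
    intro a b hab A hA
    match a, b with
    | 0, b => exact ⟨∅, empty_subset _, Or.inl (by simp [isNClique_empty])⟩
    | a, 0 => exact ⟨∅, empty_subset _, Or.inr (by simp [isNClique_empty])⟩
    | a + 1, b + 1 =>
      have hApos : 0 < A.card := lt_of_lt_of_le (Nat.pow_pos (by norm_num)) hA
      obtain ⟨v, hv⟩ := Finset.card_pos.mp hApos
      set N := (A.erase v).filter (fun w => H.Adj v w) with hN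
      set M := (A.erase v).filter (fun w => ¬ H.Adj v w) with hM
      have hNM : N.card + M.card = A.card - 1 := by
        rw [hN, hM, Finset.card_filter_add_card_filter_not, Finset.card_erase_of_mem hv]
      have key : 2 ^ (a + (b+1)) ≤ N.card ∨ 2 ^ ((a+1) + b) ≤ M.card := by
        by_contra h
        push_neg at h
        have h1 : N.card + M.card ≤ 2 ^ (a + (b+1)) - 1 + (2 ^ ((a+1) + b) - 1) :=
          Nat.add_le_add (Nat.le_sub_one_of_lt h.1) (Nat.le_sub_one_of_lt h.2)
        have h2 : 2 ^ (a + (b+1)) + 2 ^ ((a+1)+b) = 2 ^ (a + 1 + (b + 1)) := by ring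
        omega
      rcases key with hkey | hkey
      · have hsum : a + (b + 1) = k := by omega
        obtain ⟨T, hTN, hT⟩ := ih a (b+1) hsum N hkey
        rcases hT with hT | hT
        · refine ⟨insert v T, ?_, Or.inl (hT.insert ?_)⟩
          · exact Finset.insert_subset hv (hTN.trans ((Finset.filter_subset _ _).trans (Finset.erase_subset _ _)))
          · intro w hw
            exact (Finset.mem_filter.mp (hTN hw)).2
        · exact ⟨T, hTN.trans ((Finset.filter_subset _ _).trans (Finset.erase_subset _ _)), Or.inr hT⟩
      · have hsum : (a + 1) + b = k := by omega
        obtain ⟨T, hTM, hT⟩ := ih (a+1) b hsum M hkey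
        rcases hT with hT | hT
        · exact ⟨T, hTM.trans ((Finset.filter_subset _ _).trans (Finset.erase_subset _ _)), Or.inl hT⟩
        · refine ⟨insert v T, ?_, Or.inr (hT.insert ?_)⟩
          · exact Finset.insert_subset hv (hTM.trans ((Finset.filter_subset _ _).trans (Finset.erase_subset _ _)))
          · intro w hw
            have hwM := Finset.mem_filter.mp (hTM hw)
            exact ⟨(Finset.mem_erase.mp hwM.1).1.symm, hwM.2⟩

/-- **Lemma (Ramsey multiplicity).** If `F` is a graph on `n > 2·4^s` vertices, then the
number of `s`-cliques of `F` plus the number of `s`-cliques of its complement is at least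
`n^s / (2^s · 4^(s^2))`. -/
theorem stmt0 (s n : ℕ) (hs : 0 < s) (hn : 2 * 4 ^ s < n)
    (F : SimpleGraph (Fin n)) [DecidableRel F.Adj] :
    (n : ℝ) ^ s / (2 ^ s * 4 ^ s ^ 2) ≤
      ((F.cliqueFinset s).card + (Fᶜ.cliqueFinset s).card : ℝ) := by
  classical
  set m := 4 ^ s with hm
  have hsm : s ≤ m := le_of_lt (show s < 4 ^ s from Nat.lt_pow_self (by norm_num))
  have hmn : m ≤ n := by omega
  set U := F.cliqueFinset s ∪ Fᶜ.cliqueFinset s with hU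
  -- every m-subset contains a member of U
  have hcover : ∀ S ∈ (univ : Finset (Fin n)).powersetCard m, ∃ T ∈ U, T ⊆ S := by
    intro S hS
    rw [Finset.mem_powersetCard] at hS
    have h2 : 2 ^ (s + s) ≤ S.card := by
      rw [hS.2]
      have : (2:ℕ) ^ (s + s) = 4 ^ s := by rw [← two_mul, pow_mul]; norm_num
      omega
    obtain ⟨T, hTS, hT⟩ := myRamsey F (s + s) s s rfl S h2
    refine ⟨T, ?_, hTS⟩
    rcases hT with hT | hT
    · exact Finset.mem_union_left _ (mem_cliqueFinset_iff.mpr hT)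
    · exact Finset.mem_union_right _ (mem_cliqueFinset_iff.mpr hT)
  -- each T of card s is in at most choose (n-s) (m-s) many m-subsets
  have hfiber : ∀ T ∈ U,
      (((univ : Finset (Fin n)).powersetCard m).filter (fun S => T ⊆ S)).card
        ≤ (n - s).choose (m - s) := by
    intro T hT
    have hTs : T.card = s := by
      rw [hU, Finset.mem_union] at hT
      rcases hT with hT | hT
      · exact (mem_cliqueFinset_iff.mp hT).2
      · exact (mem_cliqueFinset_iff.mp hT).2
    have := Finset.card_le_card_of_injOn (f := fun S => S \ T)
      (s := ((univ : Finset (Fin n)).powersetCard m).filter (fun S => T ⊆ S))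
      (t := ((univ : Finset (Fin n)) \ T).powersetCard (m - s))
      (by
        intro S hS
        rw [Finset.mem_coe, Finset.mem_filter, Finset.mem_powersetCard] at hS
        rw [Finset.mem_coe, Finset.mem_powersetCard]
        refine ⟨fun x hx => ?_, ?_⟩
        · rw [Finset.mem_sdiff] at hx ⊢
          exact ⟨Finset.mem_univ _, hx.2⟩
        · rw [Finset.card_sdiff_of_subset hS.2, hS.1.2, hTs])
      (by
        intro S1 h1 S2 h2 h
        rw [Finset.coe_filter, Set.mem_setOf_eq] at h1 h2
        have e1 : S1 \ T ∪ T = S1 := Finset.sdiff_union_of_subset h1.2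
        have e2 : S2 \ T ∪ T = S2 := Finset.sdiff_union_of_subset h2.2
        have h' : S1 \ T = S2 \ T := h
        rw [← e1, ← e2, h'])
    rwa [Finset.card_powersetCard, Finset.card_sdiff_of_subset (Finset.subset_univ _),
      Finset.card_univ, Fintype.card_fin, hTs] at this
  -- double counting
  have hcount : n.choose m ≤ U.card * (n - s).choose (m - s) := by
    have hsub : (univ : Finset (Fin n)).powersetCard m ⊆
        U.biUnion (fun T => ((univ : Finset (Fin n)).powersetCard m).filter (fun S => T ⊆ S)) := by
      intro S hS
      obtain ⟨T, hTU, hTS⟩ := hcover S hS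
      exact Finset.mem_biUnion.mpr ⟨T, hTU, Finset.mem_filter.mpr ⟨hS, hTS⟩⟩
    calc n.choose m = ((univ : Finset (Fin n)).powersetCard m).card := by
          rw [Finset.card_powersetCard, Finset.card_univ, Fintype.card_fin]
      _ ≤ _ := Finset.card_le_card hsub
      _ ≤ ∑ T ∈ U, (((univ : Finset (Fin n)).powersetCard m).filter (fun S => T ⊆ S)).card :=
          Finset.card_biUnion_le
      _ ≤ ∑ T ∈ U, (n - s).choose (m - s) := Finset.sum_le_sum hfiber
      _ = U.card * (n - s).choose (m - s) := by rw [Finset.sum_const, smul_eq_mul]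
  -- choose n s ≤ U.card * choose m s
  have hid : n.choose m * m.choose s = n.choose s * (n - s).choose (m - s) :=
    Nat.choose_mul (n := n) hsm
  have hpos : 0 < (n - s).choose (m - s) :=
    Nat.choose_pos (by omega)
  have hkey : n.choose s ≤ U.card * m.choose s := by
    have h1 : n.choose s * (n - s).choose (m - s)
        ≤ U.card * m.choose s * (n - s).choose (m - s) := by
      calc n.choose s * (n - s).choose (m - s) = n.choose m * m.choose s := hid.symm
        _ ≤ U.card * (n - s).choose (m - s) * m.choose s :=
            Nat.mul_le_mul_right _ hcount
        _ = U.card * m.choose s * (n - s).choose (m - s) := by ring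
    exact Nat.le_of_mul_le_mul_right h1 hpos
  -- pass to powers : n^s ≤ 2^s * m^s * U.card
  have hnat : n ^ s ≤ 2 ^ s * m ^ s * U.card := by
    have h1 : n ^ s ≤ 2 ^ s * (n + 1 - s) ^ s := by
      rw [← Nat.mul_pow]
      exact Nat.pow_le_pow_left (by omega) s
    have h2 : (n + 1 - s) ^ s ≤ Nat.descFactorial n s := Nat.pow_sub_le_descFactorial n s
    have h3 : Nat.descFactorial n s = s.factorial * n.choose s :=
      Nat.descFactorial_eq_factorial_mul_choose n s
    have h4 : Nat.descFactorial m s = s.factorial * m.choose s :=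
      Nat.descFactorial_eq_factorial_mul_choose m s
    have h5 : Nat.descFactorial m s ≤ m ^ s := Nat.descFactorial_le_pow m s
    calc n ^ s ≤ 2 ^ s * (n + 1 - s) ^ s := h1
      _ ≤ 2 ^ s * (s.factorial * n.choose s) := by
          rw [← h3]; exact Nat.mul_le_mul_left _ h2
      _ ≤ 2 ^ s * (s.factorial * (U.card * m.choose s)) := by
          exact Nat.mul_le_mul_left _ (Nat.mul_le_mul_left _ hkey)
      _ = 2 ^ s * (s.factorial * m.choose s) * U.card := by ring
      _ ≤ 2 ^ s * m ^ s * U.card := by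
          exact Nat.mul_le_mul_right _ (Nat.mul_le_mul_left _ (h4 ▸ h5))
  have hUcard : U.card ≤ (F.cliqueFinset s).card + (Fᶜ.cliqueFinset s).card :=
    Finset.card_union_le _ _
  -- final real arithmetic
  have hposR : (0:ℝ) < 2 ^ s * 4 ^ s ^ 2 := by positivity
  rw [div_le_iff₀ hposR]
  have h4s : (4:ℝ) ^ s ^ 2 = ((m : ℕ) : ℝ) ^ s := by
    push_cast [hm]
    rw [← pow_mul, sq]
  calc (n:ℝ) ^ s ≤ ((2 ^ s * m ^ s * U.card : ℕ) : ℝ) := by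
        exact_mod_cast hnat
    _ ≤ (((F.cliqueFinset s).card + (Fᶜ.cliqueFinset s).card : ℕ) : ℝ) * (2 ^ s * 4 ^ s ^ 2) := by
        rw [h4s]
        push_cast
        have hc : ((U.card : ℝ)) ≤ ((F.cliqueFinset s).card : ℝ) + ((Fᶜ.cliqueFinset s).card : ℝ) := by
          exact_mod_cast hUcard
        calc (2:ℝ) ^ s * (m:ℝ) ^ s * (U.card:ℝ)
            ≤ 2 ^ s * (m:ℝ) ^ s * (((F.cliqueFinset s).card : ℝ) + ((Fᶜ.cliqueFinset s).card : ℝ)) :=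
              mul_le_mul_of_nonneg_left hc (by positivity)
          _ = _ := by ring
    _ = _ := by push_cast; ring
end

section
/- Let G be an n-vertex K_r-free graph with no induced copy of K_{s,t}. If t_m(G) denotes the number of m-cliques of G, then m·t_m(G) ≤ 2(t+r)^{tm/s}(r+s)^s · n^{m-(m-1)/s} + (r+s)^s · n^{m-1}. -/
open SimpleGraph Finset

/-- `H` occurs in `G` as an induced subgraph. -/
def HasInducedCopy {α β : Type*} (H : SimpleGraph α) (G : SimpleGraph β) : Prop :=
  Nonempty (H ↪g G)

section AuxLemmas


lemma sub_pow_le_descFactorial (w : ℕ) : ∀ s : ℕ, (w + 1 - s) ^ s ≤ w.descFactorial s := by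
  intro s
  induction s with
  | zero => simp
  | succ s ih =>
    rw [Nat.descFactorial_succ, pow_succ]
    have h1 : (w + 1 - (s + 1)) = w - s := by omega
    rw [h1]
    calc (w - s) ^ s * (w - s) ≤ (w + 1 - s) ^ s * (w - s) :=
          Nat.mul_le_mul_right _ (Nat.pow_le_pow_left (by omega) s)
      _ ≤ w.descFactorial s * (w - s) := Nat.mul_le_mul_right _ ih
      _ = (w - s) * w.descFactorial s := Nat.mul_comm _ _

lemma descFactorial_choose : ∀ (s q w : ℕ), s ≤ q → q ≤ w →
    w.descFactorial s * (w - s).choose (q - s) = q.descFactorial s * w.choose q := by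
  intro s
  induction s with
  | zero => simp
  | succ s ih =>
    intro q w hsq hqw
    have ihq := ih q w (by omega) hqw
    obtain ⟨W', hW'⟩ : ∃ W', w - s = W' + 1 := ⟨w - s - 1, by omega⟩
    obtain ⟨Q', hQ'⟩ : ∃ Q', q - s = Q' + 1 := ⟨q - s - 1, by omega⟩
    have h3 : w - (s + 1) = W' := by omega
    have h4 : q - (s + 1) = Q' := by omega
    have key : (q - s) * (w - s).choose (q - s) = (w - s) * W'.choose Q' := by
      rw [hW', hQ']
      calc (Q' + 1) * (W' + 1).choose (Q' + 1)
          = (W' + 1).choose (Q' + 1) * (Q' + 1) := mul_comm _ _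
        _ = Nat.succ W' * W'.choose Q' := (Nat.add_one_mul_choose_eq W' Q').symm
        _ = (W' + 1) * W'.choose Q' := rfl
    rw [Nat.descFactorial_succ, Nat.descFactorial_succ, h3, h4]
    calc (w - s) * Nat.descFactorial w s * W'.choose Q'
        = Nat.descFactorial w s * ((w - s) * W'.choose Q') := by ring
      _ = Nat.descFactorial w s * ((q - s) * (w - s).choose (q - s)) := by rw [← key]
      _ = (q - s) * (Nat.descFactorial w s * (w - s).choose (q - s)) := by ring
      _ = (q - s) * (Nat.descFactorial q s * w.choose q) := by rw [ihq]
      _ = (q - s) * Nat.descFactorial q s * w.choose q := by ring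

section
open SimpleGraph Finset
variable {V : Type*} [Fintype V] [DecidableEq V] (G : SimpleGraph V) [DecidableRel G.Adj]

/-- Finite Ramsey with the binomial bound, inside a host graph. -/
lemma ramsey_finset : ∀ (k a b : ℕ), a + b ≤ k → ∀ (W : Finset V),
    (a + b).choose a ≤ W.card →
    (∃ S ⊆ W, G.IsNClique (a + 1) S) ∨ (∃ T ⊆ W, Gᶜ.IsNClique (b + 1) T) := by
  intro k
  induction k with
  | zero =>
    intro a b hab W hW
    obtain ⟨rfl, rfl⟩ : a = 0 ∧ b = 0 := by omega
    simp only [Nat.choose_self] at hW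
    obtain ⟨v, hv⟩ := Finset.card_pos.mp (lt_of_lt_of_le one_pos hW)
    exact Or.inl ⟨{v}, by simpa using hv, by simp [isNClique_one]⟩
  | succ k ih =>
    intro a b hab W hW
    rcases Nat.eq_zero_or_pos a with rfl | ha
    · simp only [Nat.zero_add, Nat.choose_zero_right] at hW
      obtain ⟨v, hv⟩ := Finset.card_pos.mp hW
      exact Or.inl ⟨{v}, by simpa using hv, by simp [isNClique_one]⟩
    rcases Nat.eq_zero_or_pos b with rfl | hb
    · obtain ⟨v, hv⟩ := Finset.card_pos.mp (lt_of_lt_of_le (Nat.choose_pos (by omega)) hW)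
      exact Or.inr ⟨{v}, by simpa using hv, by simp [isNClique_one]⟩
    obtain ⟨a₁, rfl⟩ : ∃ a₁, a = a₁ + 1 := ⟨a - 1, by omega⟩
    obtain ⟨b₁, rfl⟩ : ∃ b₁, b = b₁ + 1 := ⟨b - 1, by omega⟩
    have hWpos : 0 < W.card := lt_of_lt_of_le (Nat.choose_pos (by omega)) hW
    obtain ⟨v, hv⟩ := Finset.card_pos.mp hWpos
    set Wn := (W.erase v).filter (fun u => G.Adj v u) with hWn
    set Wm := (W.erase v).filter (fun u => ¬ G.Adj v u) with hWm
    have hsplit : Wn.card + Wm.card = W.card - 1 := by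
      rw [hWn, hWm, Finset.card_filter_add_card_filter_not,
        Finset.card_erase_of_mem hv]
    have hkey : (a₁ + (b₁ + 1)).choose a₁ ≤ Wn.card ∨
        (a₁ + 1 + b₁).choose (a₁ + 1) ≤ Wm.card := by
      by_contra hcon
      push_neg at hcon
      have h1 : (a₁ + 1 + (b₁ + 1)).choose (a₁ + 1) =
          (a₁ + (b₁ + 1)).choose a₁ + (a₁ + 1 + b₁).choose (a₁ + 1) := by
        have e : a₁ + 1 + (b₁ + 1) = (a₁ + b₁ + 1) + 1 := by omega
        rw [e, Nat.choose_succ_succ]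
        congr 2 <;> omega
      omega
    rcases hkey with h | h
    · rcases ih a₁ (b₁ + 1) (by omega) Wn h with ⟨S, hSW, hS⟩ | ⟨T, hTW, hT⟩
      · refine Or.inl ⟨insert v S, ?_, ?_⟩
        · intro x hx
          rcases Finset.mem_insert.mp hx with rfl | hx
          · exact hv
          · exact Finset.mem_of_mem_erase (Finset.mem_of_mem_filter x (hSW hx))
        · exact hS.insert (fun u hu => (Finset.mem_filter.mp (hSW hu)).2)
      · exact Or.inr ⟨T, fun x hx =>
          Finset.mem_of_mem_erase (Finset.mem_of_mem_filter x (hTW hx)), hT⟩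
    · rcases ih (a₁ + 1) b₁ (by omega) Wm h with ⟨S, hSW, hS⟩ | ⟨T, hTW, hT⟩
      · exact Or.inl ⟨S, fun x hx =>
          Finset.mem_of_mem_erase (Finset.mem_of_mem_filter x (hSW hx)), hS⟩
      · refine Or.inr ⟨insert v T, ?_, ?_⟩
        · intro x hx
          rcases Finset.mem_insert.mp hx with rfl | hx
          · exact hv
          · exact Finset.mem_of_mem_erase (Finset.mem_of_mem_filter x (hTW hx))
        · refine hT.insert (fun u hu => ?_)
          have hu' := hTW hu
          rw [hWm, Finset.mem_filter, Finset.mem_erase] at hu'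
          exact ⟨(hu'.1.1).symm, hu'.2⟩


end

section

variable {V : Type*} [Fintype V] [DecidableEq V] (G : SimpleGraph V) [DecidableRel G.Adj]

/-- common neighborhood of a finset of vertices -/
def cn (J : Finset V) : Finset V := Finset.univ.filter (fun v => ∀ u ∈ J, G.Adj u v)

lemma mem_cn {J : Finset V} {v : V} : v ∈ cn G J ↔ ∀ u ∈ J, G.Adj u v := by
  simp [cn]

lemma ramsey_finset' (a b : ℕ) (W : Finset V) (h : (a + b).choose a ≤ W.card) :
    (∃ S ⊆ W, G.IsNClique (a + 1) S) ∨ (∃ T ⊆ W, Gᶜ.IsNClique (b + 1) T) :=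
  ramsey_finset G (a + b) a b le_rfl W h

variable {r₁ s₁ t₁ : ℕ}

/-- Counting independent (s₁+1)-subsets of a set W in a K_{r₁+1}-free graph. -/
lemma indep_lower (hKr : G.CliqueFree (r₁ + 1)) (W : Finset V) :
    (W.card - ((r₁ + s₁).choose r₁ + (s₁ + 1))) ^ (s₁ + 1) ≤
      ((r₁ + s₁).choose r₁) ^ (s₁ + 1) *
        ((Gᶜ.cliqueFinset (s₁ + 1)).filter (fun S => S ⊆ W)).card := by
  set q := (r₁ + s₁).choose r₁ with hq
  set s := s₁ + 1 with hsdef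
  set w := W.card with hw
  by_cases hle : w ≤ q + s
  · have : w - (q + s) = 0 := by omega
    rw [this, zero_pow (by omega)]
    exact Nat.zero_le _
  push_neg at hle
  -- W is nonempty, so r₁ ≥ 1 is forced unless contradiction
  have hWne : W.Nonempty := Finset.card_pos.mp (by omega)
  rcases Nat.eq_zero_or_pos r₁ with rfl | hr₁
  · obtain ⟨v, hv⟩ := hWne
    exact absurd (by simp [isNClique_one] : G.IsNClique 1 {v}) (hKr {v})
  have hsq : s ≤ q := by
    have h1 : (s₁ + 1).choose s₁ ≤ (r₁ + s₁).choose s₁ :=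
      Nat.choose_le_choose s₁ (by omega)
    have h2 : (s₁ + 1).choose s₁ = s₁ + 1 := by
      have h := Nat.choose_symm (n := s₁ + 1) (k := 1) (by omega)
      simpa using h
    have h3 : (r₁ + s₁).choose r₁ = (r₁ + s₁).choose s₁ := by
      have h := (Nat.choose_symm (Nat.le_add_right r₁ s₁)).symm
      simpa using h
    omega
  set N := ((Gᶜ.cliqueFinset s).filter (fun S => S ⊆ W)).card with hN
  -- every q-subset of W contains an independent s-set
  have step1 : ∀ Q ∈ W.powersetCard q, ∃ S ⊆ Q, Gᶜ.IsNClique s S := by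
    intro Q hQ
    rw [Finset.mem_powersetCard] at hQ
    rcases ramsey_finset' G r₁ s₁ Q (le_of_eq hQ.2.symm) with ⟨S, hSQ, hS⟩ | ⟨T, hTQ, hT⟩
    · exact absurd hS (hKr S)
    · exact ⟨T, hTQ, hT⟩
  have step2 : W.powersetCard q ⊆
      ((Gᶜ.cliqueFinset s).filter (fun S => S ⊆ W)).biUnion
        (fun S => (W.powersetCard q).filter (fun Q => S ⊆ Q)) := by
    intro Q hQ
    obtain ⟨S, hSQ, hS⟩ := step1 Q hQ
    rw [Finset.mem_biUnion]
    refine ⟨S, ?_, ?_⟩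
    · rw [Finset.mem_filter, SimpleGraph.mem_cliqueFinset_iff]
      exact ⟨hS, hSQ.trans (Finset.mem_powersetCard.mp hQ).1⟩
    · rw [Finset.mem_filter]; exact ⟨hQ, hSQ⟩
  have step3 : ∀ S ∈ (Gᶜ.cliqueFinset s).filter (fun S => S ⊆ W),
      ((W.powersetCard q).filter (fun Q => S ⊆ Q)).card ≤ (w - s).choose (q - s) := by
    intro S hS
    rw [Finset.mem_filter, SimpleGraph.mem_cliqueFinset_iff] at hS
    have hScard : S.card = s := hS.1.2
    have hSW : S ⊆ W := hS.2
    have : ((W.powersetCard q).filter (fun Q => S ⊆ Q)).card ≤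
        ((W \ S).powersetCard (q - s)).card := by
      apply Finset.card_le_card_of_injOn (fun Q => Q \ S)
      · intro Q hQ
        rw [Finset.mem_coe, Finset.mem_filter, Finset.mem_powersetCard] at hQ
        rw [Finset.mem_coe, Finset.mem_powersetCard]
        exact ⟨Finset.sdiff_subset_sdiff hQ.1.1 le_rfl,
          by rw [Finset.card_sdiff_of_subset hQ.2, hQ.1.2, hScard]⟩
      · intro Q₁ h₁ Q₂ h₂ he
        rw [Finset.mem_coe, Finset.mem_filter] at h₁ h₂
        have e₁ := Finset.sdiff_union_of_subset h₁.2
        have e₂ := Finset.sdiff_union_of_subset h₂.2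
        simp only at he
        rw [← e₁, ← e₂, he]
    rw [Finset.card_powersetCard, Finset.card_sdiff_of_subset hSW, hScard] at this
    exact this
  have step4 : w.choose q ≤ N * ((w - s).choose (q - s)) := by
    calc w.choose q = (W.powersetCard q).card := (Finset.card_powersetCard q W).symm
      _ ≤ (((Gᶜ.cliqueFinset s).filter (fun S => S ⊆ W)).biUnion
            (fun S => (W.powersetCard q).filter (fun Q => S ⊆ Q))).card :=
          Finset.card_le_card step2
      _ ≤ ∑ S ∈ (Gᶜ.cliqueFinset s).filter (fun S => S ⊆ W),
            ((W.powersetCard q).filter (fun Q => S ⊆ Q)).card := Finset.card_biUnion_le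
      _ ≤ ∑ _S ∈ (Gᶜ.cliqueFinset s).filter (fun S => S ⊆ W), (w - s).choose (q - s) :=
          Finset.sum_le_sum step3
      _ = N * ((w - s).choose (q - s)) := by rw [Finset.sum_const, smul_eq_mul]
  -- now the descFactorial chain
  have hcpos : 0 < (w - s).choose (q - s) := Nat.choose_pos (by omega)
  have chain : (w - (q + s)) ^ s * ((w - s).choose (q - s)) ≤
      (q ^ s * N) * ((w - s).choose (q - s)) := by
    calc (w - (q + s)) ^ s * ((w - s).choose (q - s))
        ≤ (w + 1 - s) ^ s * ((w - s).choose (q - s)) :=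
          Nat.mul_le_mul_right _ (Nat.pow_le_pow_left (by omega) s)
      _ ≤ w.descFactorial s * ((w - s).choose (q - s)) :=
          Nat.mul_le_mul_right _ (sub_pow_le_descFactorial w s)
      _ = q.descFactorial s * w.choose q := descFactorial_choose s q w hsq (by omega)
      _ ≤ q ^ s * w.choose q := Nat.mul_le_mul_right _ (Nat.descFactorial_le_pow q s)
      _ ≤ q ^ s * (N * ((w - s).choose (q - s))) := Nat.mul_le_mul_left _ step4
      _ = (q ^ s * N) * ((w - s).choose (q - s)) := by ring
  exact Nat.le_of_mul_le_mul_right chain hcpos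

end

section
open SimpleGraph Finset
variable {V : Type*} [Fintype V] [DecidableEq V] (G : SimpleGraph V) [DecidableRel G.Adj]
variable {r₁ s₁ t₁ : ℕ}

/-- An independent (s₁+1)-set has few common neighbors. -/
lemma cn_small (hKr : G.CliqueFree (r₁ + 1))
    (hind : ¬ Nonempty (completeBipartiteGraph (Fin (s₁ + 1)) (Fin (t₁ + 1)) ↪g G))
    (S : Finset V) (hS : Gᶜ.IsNClique (s₁ + 1) S) :
    (cn G S).card < (r₁ + t₁).choose r₁ := by
  by_contra hcon
  push_neg at hcon
  rcases ramsey_finset' G r₁ t₁ (cn G S) hcon with ⟨C, _, hC⟩ | ⟨T, hTcn, hT⟩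
  · exact hKr C hC
  · -- build an induced K_{s,t}
    apply hind
    have hScard : S.card = s₁ + 1 := hS.2
    have hTcard : T.card = t₁ + 1 := hT.2
    have hST : ∀ u ∈ S, ∀ x ∈ T, G.Adj u x := by
      intro u hu x hx
      exact (mem_cn G).mp (hTcn hx) u hu
    have hdisj : ∀ x ∈ T, x ∉ S := by
      intro x hx hxS
      exact G.irrefl (hST x hxS x hx)
    have hSind : ∀ u ∈ S, ∀ v ∈ S, u ≠ v → ¬ G.Adj u v := by
      intro u hu v hv huv
      exact ((SimpleGraph.compl_adj G u v).mp (hS.1 hu hv huv)).2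
    have hTind : ∀ u ∈ T, ∀ v ∈ T, u ≠ v → ¬ G.Adj u v := by
      intro u hu v hv huv
      exact ((SimpleGraph.compl_adj G u v).mp (hT.1 hu hv huv)).2
    set e₁ : Fin (s₁ + 1) ≃ S := (finCongr hScard.symm).trans S.equivFin.symm with he₁
    set e₂ : Fin (t₁ + 1) ≃ T := (finCongr hTcard.symm).trans T.equivFin.symm with he₂
    set f : Fin (s₁ + 1) ⊕ Fin (t₁ + 1) → V :=
      Sum.elim (fun i => (e₁ i : V)) (fun j => (e₂ j : V)) with hf
    have hmemS : ∀ i, (e₁ i : V) ∈ S := fun i => (e₁ i).2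
    have hmemT : ∀ j, (e₂ j : V) ∈ T := fun j => (e₂ j).2
    have hinj1 : ∀ i i', (e₁ i : V) = (e₁ i' : V) → i = i' := by
      intro i i' h
      exact e₁.injective (Subtype.coe_injective h)
    have hinj2 : ∀ j j', (e₂ j : V) = (e₂ j' : V) → j = j' := by
      intro j j' h
      exact e₂.injective (Subtype.coe_injective h)
    refine ⟨⟨⟨f, ?_⟩, ?_⟩⟩
    · -- injective
      rintro (i | i) (j | j) h <;> simp only [hf, Sum.elim_inl, Sum.elim_inr] at h
      · rw [hinj1 _ _ h]
      · exact absurd (hmemS i) (h ▸ hdisj _ (hmemT j))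
      · exact absurd (hmemS j) (h.symm ▸ hdisj _ (hmemT i))
      · rw [hinj2 _ _ h]
    · -- adjacency iff
      rintro (i | j) (i' | j') <;>
        simp only [hf, Sum.elim_inl, Sum.elim_inr, Function.Embedding.coeFn_mk,
          completeBipartiteGraph_adj, Sum.isLeft_inl, Sum.isRight_inl, Sum.isLeft_inr,
          Sum.isRight_inr, true_and, and_true, and_false, false_and, or_false, false_or,
          iff_true, iff_false]
      · constructor
        · intro hadj
          exact absurd hadj (hSind _ (hmemS i) _ (hmemS i')
            (fun h => G.irrefl (h ▸ hadj)))
        · simp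
      · exact iff_of_true (hST _ (hmemS i) _ (hmemT j')) (by simp)
      · exact iff_of_true ((hST _ (hmemS i') _ (hmemT j)).symm) (by simp)
      · constructor
        · intro hadj
          exact absurd hadj (hTind _ (hmemT j) _ (hmemT j')
            (fun h => G.irrefl (h ▸ hadj)))
        · simp
end

section
open SimpleGraph Finset
variable {V : Type*} [Fintype V] [DecidableEq V] (G : SimpleGraph V) [DecidableRel G.Adj]
variable {r₁ s₁ t₁ : ℕ}

lemma clique_double_count (k : ℕ) :
    (G.cliqueFinset (k + 1)).card * (k + 1) ≤ ∑ J ∈ G.cliqueFinset k, (cn G J).card := by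
  classical
  have h1 : ((G.cliqueFinset (k + 1)).sigma (fun K => K)).card
      = (G.cliqueFinset (k + 1)).card * (k + 1) := by
    rw [Finset.card_sigma]
    rw [Finset.sum_congr rfl (fun K hK => (SimpleGraph.mem_cliqueFinset_iff.mp hK).2)]
    rw [Finset.sum_const, smul_eq_mul]
  have h2 : ((G.cliqueFinset k).sigma (fun J => cn G J)).card
      = ∑ J ∈ G.cliqueFinset k, (cn G J).card := Finset.card_sigma _ _
  rw [← h1, ← h2]
  apply Finset.card_le_card_of_injOn (fun p => ⟨p.1.erase p.2, p.2⟩)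
  · rintro ⟨K, v⟩ hp
    rw [Finset.mem_coe, Finset.mem_sigma] at hp ⊢
    obtain ⟨hK, hv⟩ := hp
    rw [SimpleGraph.mem_cliqueFinset_iff] at hK
    constructor
    · rw [SimpleGraph.mem_cliqueFinset_iff]
      constructor
      · exact hK.1.subset (by simp [Finset.erase_subset])
      · rw [Finset.card_erase_of_mem hv, hK.2]
        omega
    · rw [mem_cn]
      intro u hu
      rw [Finset.mem_erase] at hu
      exact hK.1 (Finset.mem_coe.mpr hu.2) (Finset.mem_coe.mpr hv) hu.1
  · rintro ⟨K, v⟩ h₁ ⟨K', v'⟩ h₂ he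
    simp only [Sigma.mk.inj_iff, heq_eq_eq] at he
    obtain ⟨hKe, rfl⟩ := he
    rw [Finset.mem_coe, Finset.mem_sigma] at h₁ h₂
    have hv : v ∈ K := h₁.2
    have hv' : v ∈ K' := h₂.2
    have : K = K' := by
      rw [← Finset.insert_erase hv, ← Finset.insert_erase hv', hKe]
    simp [this]

lemma cn_swap {S J : Finset V} : S ⊆ cn G J ↔ J ⊆ cn G S := by
  constructor <;> intro h u hu <;> rw [mem_cn] <;> intro x hx <;>
    have := h hx <;> rw [mem_cn] at this <;> exact (this u hu).symm

lemma sum_indep_count_le (hKr : G.CliqueFree (r₁ + 1))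
    (hind : ¬ Nonempty (completeBipartiteGraph (Fin (s₁ + 1)) (Fin (t₁ + 1)) ↪g G)) (k : ℕ) :
    ∑ J ∈ G.cliqueFinset k,
        ((Gᶜ.cliqueFinset (s₁ + 1)).filter (fun S => S ⊆ cn G J)).card ≤
      (Fintype.card V).choose (s₁ + 1) * ((r₁ + t₁).choose r₁ - 1).choose k := by
  classical
  have hswap : ∑ J ∈ G.cliqueFinset k,
      ((Gᶜ.cliqueFinset (s₁ + 1)).filter (fun S => S ⊆ cn G J)).card
      = ∑ S ∈ Gᶜ.cliqueFinset (s₁ + 1),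
          ((G.cliqueFinset k).filter (fun J => J ⊆ cn G S)).card := by
    simp only [Finset.card_filter]
    rw [Finset.sum_comm]
    apply Finset.sum_congr rfl
    intro S _
    apply Finset.sum_congr rfl
    intro J _
    by_cases h : S ⊆ cn G J
    · rw [if_pos h, if_pos ((cn_swap G).mp h)]
    · rw [if_neg h, if_neg (fun h' => h ((cn_swap G).mpr h'))]
  rw [hswap]
  have hbound : ∀ S ∈ Gᶜ.cliqueFinset (s₁ + 1),
      ((G.cliqueFinset k).filter (fun J => J ⊆ cn G S)).card ≤
        ((r₁ + t₁).choose r₁ - 1).choose k := by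
    intro S hS
    rw [SimpleGraph.mem_cliqueFinset_iff] at hS
    have hcn := cn_small G hKr hind S hS
    calc ((G.cliqueFinset k).filter (fun J => J ⊆ cn G S)).card
        ≤ ((cn G S).powersetCard k).card := by
          apply Finset.card_le_card
          intro J hJ
          rw [Finset.mem_filter, SimpleGraph.mem_cliqueFinset_iff] at hJ
          rw [Finset.mem_powersetCard]
          exact ⟨hJ.2, hJ.1.2⟩
      _ = (cn G S).card.choose k := Finset.card_powersetCard _ _
      _ ≤ ((r₁ + t₁).choose r₁ - 1).choose k := Nat.choose_le_choose k (by omega)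
  calc ∑ S ∈ Gᶜ.cliqueFinset (s₁ + 1),
        ((G.cliqueFinset k).filter (fun J => J ⊆ cn G S)).card
      ≤ ∑ _S ∈ Gᶜ.cliqueFinset (s₁ + 1), ((r₁ + t₁).choose r₁ - 1).choose k :=
        Finset.sum_le_sum hbound
    _ = (Gᶜ.cliqueFinset (s₁ + 1)).card * ((r₁ + t₁).choose r₁ - 1).choose k := by
        rw [Finset.sum_const, smul_eq_mul]
    _ ≤ (Fintype.card V).choose (s₁ + 1) * ((r₁ + t₁).choose r₁ - 1).choose k :=
        Nat.mul_le_mul_right _ SimpleGraph.card_cliqueFinset_le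
end

end AuxLemmas

set_option maxHeartbeats 1000000 in
/-- **Theorem 2 (clique counting).** If `G` is an `n`-vertex `K_r`-free graph with no induced
`K_{s,t}` and `t_m(G)` is the number of `m`-cliques of `G`, then
`m·t_m(G) ≤ 2(t+r)^{tm/s}(r+s)^s·n^{m-(m-1)/s} + (r+s)^s·n^{m-1}`. -/
theorem stmt2 (r s t m n : ℕ) (hr : 0 < r) (hs : 0 < s) (ht : 0 < t) (hm : 0 < m)
    (G : SimpleGraph (Fin n)) [DecidableRel G.Adj]
    (hKr : G.CliqueFree r)
    (hind : ¬ HasInducedCopy (completeBipartiteGraph (Fin s) (Fin t)) G) :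
    (m : ℝ) * (G.cliqueFinset m).card ≤
      2 * (t + r : ℝ) ^ ((t * m : ℝ) / s) * (r + s : ℝ) ^ s *
        (n : ℝ) ^ ((m : ℝ) - ((m : ℝ) - 1) / s) +
      (r + s : ℝ) ^ s * (n : ℝ) ^ (m - 1) := by
  obtain ⟨r₁, rfl⟩ : ∃ r₁, r = r₁ + 1 := ⟨r - 1, by omega⟩
  obtain ⟨s₁, rfl⟩ : ∃ s₁, s = s₁ + 1 := ⟨s - 1, by omega⟩
  obtain ⟨t₁, rfl⟩ : ∃ t₁, t = t₁ + 1 := ⟨t - 1, by omega⟩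
  obtain ⟨k, rfl⟩ : ∃ k, m = k + 1 := ⟨m - 1, by omega⟩
  have hindNE : ¬ Nonempty
      (completeBipartiteGraph (Fin (s₁ + 1)) (Fin (t₁ + 1)) ↪g G) := hind
  -- notation
  set q : ℕ := (r₁ + s₁).choose r₁ with hqdef
  set A : ℕ := q + (s₁ + 1) with hAdef
  set R' : ℕ := (r₁ + t₁).choose r₁ with hR'def
  set T1 : ℕ := (G.cliqueFinset k).card with hT1def
  set Tm : ℕ := (G.cliqueFinset (k + 1)).card with hTmdef
  have hcard : Fintype.card (Fin n) = n := Fintype.card_fin n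
  -- ℕ facts
  have hT1n : T1 ≤ n ^ k := by
    calc T1 ≤ (Fintype.card (Fin n)).choose k := SimpleGraph.card_cliqueFinset_le
      _ = n.choose k := by rw [hcard]
      _ ≤ n ^ k := Nat.choose_le_pow n k
  have hqb : q ≤ (r₁ + s₁ + 2) ^ s₁ := by
    calc q = (r₁ + s₁).choose s₁ := by
          rw [hqdef]
          have h := (Nat.choose_symm (Nat.le_add_right r₁ s₁)).symm
          simpa using h
      _ ≤ (r₁ + s₁) ^ s₁ := Nat.choose_le_pow _ _
      _ ≤ (r₁ + s₁ + 2) ^ s₁ := Nat.pow_le_pow_left (by omega) _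
  have hA : A ≤ (r₁ + s₁ + 2) ^ (s₁ + 1) := by
    have h1 : (1:ℕ) ≤ (r₁ + s₁ + 2) ^ s₁ := Nat.one_le_pow _ _ (by omega)
    have h2 : (r₁ + s₁ + 2) ^ (s₁ + 1) = (r₁ + s₁ + 2) ^ s₁ * (r₁ + s₁ + 2) := pow_succ _ _
    have h3 : s₁ + 1 ≤ (r₁ + s₁ + 2) ^ s₁ * (r₁ + s₁ + 1) :=
      le_trans (by omega) (Nat.mul_le_mul h1 (le_refl (r₁ + s₁ + 1)))
    have h4 : (r₁ + s₁ + 2) ^ s₁ * (r₁ + s₁ + 2) =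
        (r₁ + s₁ + 2) ^ s₁ + (r₁ + s₁ + 2) ^ s₁ * (r₁ + s₁ + 1) := by ring
    omega
  have hB : R' - 1 ≤ (t₁ + r₁ + 2) ^ t₁ := by
    have h1 : R' = (r₁ + t₁).choose t₁ := by
      rw [hR'def]
      have h := (Nat.choose_symm (Nat.le_add_right r₁ t₁)).symm
      simpa using h
    have h2 : (r₁ + t₁).choose t₁ ≤ (r₁ + t₁) ^ t₁ := Nat.choose_le_pow _ _
    have h3 : (r₁ + t₁) ^ t₁ ≤ (t₁ + r₁ + 2) ^ t₁ := Nat.pow_le_pow_left (by omega) _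
    omega
  -- F1
  have F1 : Tm * (k + 1) ≤ A * T1 + ∑ J ∈ G.cliqueFinset k, ((cn G J).card - A) := by
    calc Tm * (k + 1) ≤ ∑ J ∈ G.cliqueFinset k, (cn G J).card := clique_double_count G k
      _ ≤ ∑ J ∈ G.cliqueFinset k, (A + ((cn G J).card - A)) :=
          Finset.sum_le_sum (fun J _ => by omega)
      _ = A * T1 + ∑ J ∈ G.cliqueFinset k, ((cn G J).card - A) := by
          rw [Finset.sum_add_distrib, Finset.sum_const, smul_eq_mul, mul_comm, hT1def]
  -- F2
  have F2 : ∑ J ∈ G.cliqueFinset k, ((cn G J).card - A) ^ (s₁ + 1) ≤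
      q ^ (s₁ + 1) * (n.choose (s₁ + 1) * (R' - 1).choose k) := by
    calc ∑ J ∈ G.cliqueFinset k, ((cn G J).card - A) ^ (s₁ + 1)
        ≤ ∑ J ∈ G.cliqueFinset k, q ^ (s₁ + 1) *
            ((Gᶜ.cliqueFinset (s₁ + 1)).filter (fun S => S ⊆ cn G J)).card :=
          Finset.sum_le_sum (fun J _ => indep_lower G hKr (cn G J))
      _ = q ^ (s₁ + 1) * ∑ J ∈ G.cliqueFinset k,
            ((Gᶜ.cliqueFinset (s₁ + 1)).filter (fun S => S ⊆ cn G J)).card := by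
          rw [Finset.mul_sum]
      _ ≤ q ^ (s₁ + 1) * ((Fintype.card (Fin n)).choose (s₁ + 1) * (R' - 1).choose k) :=
          Nat.mul_le_mul_left _ (sum_indep_count_le G hKr hindNE k)
      _ = q ^ (s₁ + 1) * (n.choose (s₁ + 1) * (R' - 1).choose k) := by rw [hcard]
  have F2' : ∑ J ∈ G.cliqueFinset k, ((cn G J).card - A) ^ (s₁ + 1) ≤
      ((r₁ + s₁ + 2) ^ s₁) ^ (s₁ + 1) * n ^ (s₁ + 1) * ((t₁ + r₁ + 2) ^ t₁) ^ k := by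
    calc ∑ J ∈ G.cliqueFinset k, ((cn G J).card - A) ^ (s₁ + 1)
        ≤ q ^ (s₁ + 1) * (n.choose (s₁ + 1) * (R' - 1).choose k) := F2
      _ ≤ ((r₁ + s₁ + 2) ^ s₁) ^ (s₁ + 1) * (n ^ (s₁ + 1) * ((t₁ + r₁ + 2) ^ t₁) ^ k) := by
          apply Nat.mul_le_mul
          · exact Nat.pow_le_pow_left hqb _
          · apply Nat.mul_le_mul
            · exact (Nat.choose_le_pow _ _)
            · exact le_trans (Nat.choose_le_pow _ _) (Nat.pow_le_pow_left hB _)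
      _ = ((r₁ + s₁ + 2) ^ s₁) ^ (s₁ + 1) * n ^ (s₁ + 1) * ((t₁ + r₁ + 2) ^ t₁) ^ k := by
          ring
  -- ============ real endgame ============
  by_cases hT1z : T1 = 0
  · -- no k-cliques at all: then no (k+1)-cliques either
    have hFe : G.cliqueFinset k = ∅ := Finset.card_eq_zero.mp hT1z
    have hTm0 : Tm = 0 := by
      have h := F1
      rw [hFe] at h
      simp [hT1z] at h
      omega
    rw [hTm0]
    simp only [Nat.cast_zero, mul_zero]
    positivity
  have hT1pos : (0:ℝ) < (T1 : ℝ) := by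
    have : 0 < T1 := Nat.pos_of_ne_zero hT1z
    exact_mod_cast this
  set Nr : ℝ := (n : ℝ) with hNrdef
  have hNrnn : (0:ℝ) ≤ Nr := Nat.cast_nonneg n
  set x : Finset (Fin n) → ℝ := fun J => (((cn G J).card - A : ℕ) : ℝ) with hxdef
  set X : ℝ := ∑ J ∈ G.cliqueFinset k, x J with hXdef
  have hXnn : 0 ≤ X := Finset.sum_nonneg (fun J _ => Nat.cast_nonneg _)
  have holder : X ^ (s₁ + 1) ≤ (T1:ℝ) ^ s₁ * ∑ J ∈ G.cliqueFinset k, x J ^ (s₁ + 1) := by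
    have h := pow_sum_div_card_le_sum_pow (s := G.cliqueFinset k) (f := x)
      (fun i _ => Nat.cast_nonneg _) s₁
    rw [← hT1def] at h
    rw [div_le_iff₀ (by positivity)] at h
    calc X ^ (s₁ + 1)
        ≤ (∑ J ∈ G.cliqueFinset k, x J ^ (s₁ + 1)) * (T1:ℝ) ^ s₁ := h
      _ = (T1:ℝ) ^ s₁ * ∑ J ∈ G.cliqueFinset k, x J ^ (s₁ + 1) := by ring
  have hsum : ∑ J ∈ G.cliqueFinset k, x J ^ (s₁ + 1) ≤
      ((((r₁ + s₁ + 2) ^ s₁) ^ (s₁ + 1) * n ^ (s₁ + 1) * ((t₁ + r₁ + 2) ^ t₁) ^ k : ℕ) : ℝ) := by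
    calc ∑ J ∈ G.cliqueFinset k, x J ^ (s₁ + 1)
        = ((∑ J ∈ G.cliqueFinset k, ((cn G J).card - A) ^ (s₁ + 1) : ℕ) : ℝ) := by
          rw [Nat.cast_sum]
          exact Finset.sum_congr rfl (fun J _ => by rw [hxdef]; push_cast; ring)
      _ ≤ _ := by exact_mod_cast F2'
  set CA : ℝ := ((r₁ + s₁ + 2 : ℕ) : ℝ) ^ s₁ with hCAdef
  set CB : ℝ := ((t₁ + r₁ + 2 : ℕ) : ℝ) ^ t₁ with hCBdef
  have hCAnn : (0:ℝ) ≤ CA := by positivity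
  have hCBnn : (0:ℝ) ≤ CB := by positivity
  have hXP : X ^ (s₁ + 1) ≤ (Nr ^ (k * s₁ + (s₁ + 1))) * CA ^ (s₁ + 1) * CB ^ k := by
    calc X ^ (s₁ + 1)
        ≤ (T1:ℝ) ^ s₁ * ∑ J ∈ G.cliqueFinset k, x J ^ (s₁ + 1) := holder
      _ ≤ (T1:ℝ) ^ s₁ *
          ((((r₁ + s₁ + 2) ^ s₁) ^ (s₁ + 1) * n ^ (s₁ + 1) * ((t₁ + r₁ + 2) ^ t₁) ^ k : ℕ) : ℝ) :=
          mul_le_mul_of_nonneg_left hsum (by positivity)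
      _ ≤ ((n:ℝ) ^ k) ^ s₁ *
          ((((r₁ + s₁ + 2) ^ s₁) ^ (s₁ + 1) * n ^ (s₁ + 1) * ((t₁ + r₁ + 2) ^ t₁) ^ k : ℕ) : ℝ) := by
          apply mul_le_mul_of_nonneg_right _ (by positivity)
          have h1 : (T1:ℝ) ≤ (n:ℝ) ^ k := by exact_mod_cast hT1n
          exact pow_le_pow_left₀ (le_of_lt hT1pos) h1 s₁
      _ = (Nr ^ (k * s₁ + (s₁ + 1))) * CA ^ (s₁ + 1) * CB ^ k := by
          rw [hCAdef, hCBdef, hNrdef]; push_cast; ring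
  have hs0 : (s₁ + 1 : ℕ) ≠ 0 := Nat.succ_ne_zero s₁
  set iv : ℝ := (((s₁ + 1 : ℕ) : ℝ))⁻¹ with hivdef
  have hivnn : 0 ≤ iv := by positivity
  have hroot : X ≤ ((Nr ^ (k * s₁ + (s₁ + 1))) ^ iv) * CA * ((CB ^ k) ^ iv) := by
    have h1 : X = (X ^ (s₁ + 1)) ^ iv := by
      rw [hivdef]; exact (Real.pow_rpow_inv_natCast hXnn hs0).symm
    have h2 : ((Nr ^ (k * s₁ + (s₁ + 1))) * CA ^ (s₁ + 1) * CB ^ k) ^ iv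
        = ((Nr ^ (k * s₁ + (s₁ + 1))) ^ iv) * CA * ((CB ^ k) ^ iv) := by
      rw [Real.mul_rpow (mul_nonneg (pow_nonneg hNrnn _) (pow_nonneg hCAnn _))
          (pow_nonneg hCBnn k),
        Real.mul_rpow (pow_nonneg hNrnn _) (pow_nonneg hCAnn _)]
      rw [hivdef, Real.pow_rpow_inv_natCast hCAnn hs0]
    rw [h1, ← h2]
    exact Real.rpow_le_rpow (pow_nonneg hXnn _) hXP hivnn
  -- identify the Nr-factor with the goal exponent
  have hf1 : (Nr ^ (k * s₁ + (s₁ + 1))) ^ iv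
      = Nr ^ ((((k+1 : ℕ)) : ℝ) - ((((k+1 : ℕ)) : ℝ) - 1) / (((s₁+1 : ℕ)) : ℝ)) := by
    rw [← Real.rpow_natCast Nr (k * s₁ + (s₁ + 1)), ← Real.rpow_mul hNrnn]
    congr 1
    rw [hivdef]
    have hs1 : (((s₁ + 1 : ℕ)) : ℝ) ≠ 0 := by positivity
    field_simp
    push_cast
    ring
  -- bound the CB-factor
  have hQBeq : ((t₁ + r₁ + 2 : ℕ) : ℝ) = (↑(t₁ + 1) + ↑(r₁ + 1) : ℝ) := by push_cast; ring
  have hQb1 : (1:ℝ) ≤ ((t₁ + r₁ + 2 : ℕ) : ℝ) := by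
    have : (1:ℕ) ≤ t₁ + r₁ + 2 := by omega
    exact_mod_cast this
  have hf3 : (CB ^ k) ^ iv ≤
      ((t₁ + r₁ + 2 : ℕ) : ℝ) ^ ((↑(t₁ + 1) * ↑(k + 1) : ℝ) / ↑(s₁ + 1)) := by
    have h1 : (CB ^ k) = ((t₁ + r₁ + 2 : ℕ) : ℝ) ^ (t₁ * k) := by
      rw [hCBdef, ← pow_mul]
    rw [h1, ← Real.rpow_natCast (((t₁ + r₁ + 2 : ℕ)) : ℝ) (t₁ * k), ← Real.rpow_mul (by positivity)]
    apply Real.rpow_le_rpow_of_exponent_le hQb1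
    rw [hivdef]
    rw [← div_eq_mul_inv]
    apply div_le_div_of_nonneg_right ?_ (by positivity)
    · push_cast
      nlinarith [Nat.cast_nonneg (α := ℝ) t₁, Nat.cast_nonneg (α := ℝ) k]
  -- bound the CA-factor
  have hRSeq : ((r₁ + s₁ + 2 : ℕ) : ℝ) = (↑(r₁ + 1) + ↑(s₁ + 1) : ℝ) := by push_cast; ring
  have hRS1 : (1:ℝ) ≤ ((r₁ + s₁ + 2 : ℕ) : ℝ) := by
    have : (1:ℕ) ≤ r₁ + s₁ + 2 := by omega
    exact_mod_cast this
  have hf2 : CA ≤ ((r₁ + s₁ + 2 : ℕ) : ℝ) ^ (s₁ + 1) := by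
    rw [hCAdef]
    exact pow_le_pow_right₀ hRS1 (by omega)
  -- combine for X
  have boundX : X ≤
      (↑(t₁ + 1) + ↑(r₁ + 1) : ℝ) ^ ((↑(t₁ + 1) * ↑(k + 1) : ℝ) / ↑(s₁ + 1)) *
      (↑(r₁ + 1) + ↑(s₁ + 1) : ℝ) ^ (s₁ + 1) *
      Nr ^ ((((k+1 : ℕ)) : ℝ) - ((((k+1 : ℕ)) : ℝ) - 1) / (((s₁+1 : ℕ)) : ℝ)) := by
    calc X ≤ ((Nr ^ (k * s₁ + (s₁ + 1))) ^ iv) * CA * ((CB ^ k) ^ iv) := hroot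
      _ ≤ ((Nr ^ (k * s₁ + (s₁ + 1))) ^ iv) * (((r₁ + s₁ + 2 : ℕ) : ℝ) ^ (s₁ + 1)) *
            (((t₁ + r₁ + 2 : ℕ) : ℝ) ^ ((↑(t₁ + 1) * ↑(k + 1) : ℝ) / ↑(s₁ + 1))) := by
          apply mul_le_mul
          · exact mul_le_mul_of_nonneg_left hf2 (Real.rpow_nonneg (pow_nonneg hNrnn _) iv)
          · exact hf3
          · exact Real.rpow_nonneg (pow_nonneg hCBnn k) iv
          · exact mul_nonneg (Real.rpow_nonneg (pow_nonneg hNrnn _) iv) (by positivity)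
      _ = _ := by
          rw [hf1, hQBeq, hRSeq]
          ring
  -- the A-part
  have boundA : ((A * T1 : ℕ) : ℝ) ≤ (↑(r₁ + 1) + ↑(s₁ + 1) : ℝ) ^ (s₁ + 1) * Nr ^ k := by
    have h1 : ((A : ℕ) : ℝ) ≤ (↑(r₁ + 1) + ↑(s₁ + 1) : ℝ) ^ (s₁ + 1) := by
      rw [← hRSeq]
      calc ((A : ℕ) : ℝ) ≤ (((r₁ + s₁ + 2) ^ (s₁ + 1) : ℕ) : ℝ) := by exact_mod_cast hA
        _ = ((r₁ + s₁ + 2 : ℕ) : ℝ) ^ (s₁ + 1) := by push_cast; ring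
    have h2 : ((T1 : ℕ) : ℝ) ≤ Nr ^ k := by
      rw [hNrdef]
      calc ((T1 : ℕ) : ℝ) ≤ ((n ^ k : ℕ) : ℝ) := by exact_mod_cast hT1n
        _ = (n:ℝ) ^ k := by push_cast; ring
    calc ((A * T1 : ℕ) : ℝ) = ((A : ℕ) : ℝ) * ((T1 : ℕ) : ℝ) := by push_cast; ring
      _ ≤ (↑(r₁ + 1) + ↑(s₁ + 1) : ℝ) ^ (s₁ + 1) * Nr ^ k :=
          mul_le_mul h1 h2 (Nat.cast_nonneg _) (by positivity)
  -- final assembly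
  have hstart : ((k + 1 : ℕ) : ℝ) * (Tm : ℝ) ≤ ((A * T1 : ℕ) : ℝ) + X := by
    calc ((k + 1 : ℕ) : ℝ) * (Tm : ℝ) = ((Tm * (k + 1) : ℕ) : ℝ) := by push_cast; ring
      _ ≤ ((A * T1 + ∑ J ∈ G.cliqueFinset k, ((cn G J).card - A) : ℕ) : ℝ) := by
          exact_mod_cast F1
      _ = ((A * T1 : ℕ) : ℝ) + X := by
        rw [Nat.cast_add, hXdef]
        congr 1
        rw [Nat.cast_sum]
  have hk1 : k + 1 - 1 = k := by omega
  rw [hk1]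
  have hfirst_nn : (0:ℝ) ≤
      (↑(t₁ + 1) + ↑(r₁ + 1) : ℝ) ^ ((↑(t₁ + 1) * ↑(k + 1) : ℝ) / ↑(s₁ + 1)) *
      (↑(r₁ + 1) + ↑(s₁ + 1) : ℝ) ^ (s₁ + 1) *
      Nr ^ ((((k+1 : ℕ)) : ℝ) - ((((k+1 : ℕ)) : ℝ) - 1) / (((s₁+1 : ℕ)) : ℝ)) :=
    mul_nonneg (mul_nonneg (Real.rpow_nonneg (by positivity) _) (by positivity))
      (Real.rpow_nonneg hNrnn _)
  calc ((k + 1 : ℕ) : ℝ) * ((G.cliqueFinset (k + 1)).card : ℝ)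
      = ((k + 1 : ℕ) : ℝ) * (Tm : ℝ) := by rw [hTmdef]
    _ ≤ ((A * T1 : ℕ) : ℝ) + X := hstart
    _ ≤ (↑(r₁ + 1) + ↑(s₁ + 1) : ℝ) ^ (s₁ + 1) * Nr ^ k +
        (↑(t₁ + 1) + ↑(r₁ + 1) : ℝ) ^ ((↑(t₁ + 1) * ↑(k + 1) : ℝ) / ↑(s₁ + 1)) *
        (↑(r₁ + 1) + ↑(s₁ + 1) : ℝ) ^ (s₁ + 1) *
        Nr ^ ((((k+1 : ℕ)) : ℝ) - ((((k+1 : ℕ)) : ℝ) - 1) / (((s₁+1 : ℕ)) : ℝ)) :=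
        add_le_add boundA boundX
    _ ≤ 2 * (↑(t₁ + 1) + ↑(r₁ + 1) : ℝ) ^ ((↑(t₁ + 1) * ↑(k + 1) : ℝ) / ↑(s₁ + 1)) *
        (↑(r₁ + 1) + ↑(s₁ + 1) : ℝ) ^ (s₁ + 1) *
        Nr ^ ((((k+1 : ℕ)) : ℝ) - ((((k+1 : ℕ)) : ℝ) - 1) / (((s₁+1 : ℕ)) : ℝ)) +
        (↑(r₁ + 1) + ↑(s₁ + 1) : ℝ) ^ (s₁ + 1) * Nr ^ k := by
        nlinarith [hfirst_nn]
end

section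
/- For any positive integers s, t and any fixed graph H, the maximum number of edges of an n-vertex graph containing no copy of H as a subgraph and no induced copy of K_{s,t} is O(n^{2-1/s}), where the implied constant depends only on H, s, and t. -/
open SimpleGraph Finset

/-- `H` occurs in `G` as a (not necessarily induced) subgraph. -/
def HasCopy {α β : Type*} (H : SimpleGraph α) (G : SimpleGraph β) : Prop :=
  ∃ f : α → β, Function.Injective f ∧ ∀ a b, H.Adj a b → G.Adj (f a) (f b)

/-- Finite Ramsey theorem, finset form. -/
lemma myRamsey_s3 : ∀ a b : ℕ, ∃ R : ℕ, ∀ {V : Type} [DecidableEq V] (G : SimpleGraph V)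
    (U : Finset V), R ≤ U.card →
    (∃ K ⊆ U, G.IsNClique a K) ∨ (∃ I ⊆ U, Gᶜ.IsNClique b I) := by
  intro a
  induction a with
  | zero =>
    exact fun b => ⟨0, fun G U _ => Or.inl ⟨∅, empty_subset _, by simp⟩⟩
  | succ a iha =>
    intro b
    induction b with
    | zero =>
      exact ⟨0, fun G U _ => Or.inr ⟨∅, empty_subset _, by simp⟩⟩
    | succ b ihb =>
      obtain ⟨R1, h1⟩ := iha (b + 1)
      obtain ⟨R2, h2⟩ := ihb
      refine ⟨R1 + R2 + 1, fun {V} _ G U hU => ?_⟩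
      classical
      have hU0 : 0 < U.card := by omega
      obtain ⟨v, hv⟩ := Finset.card_pos.mp hU0
      set A := (U.erase v).filter (fun x => G.Adj v x) with hAdef
      set B := (U.erase v).filter (fun x => ¬ G.Adj v x) with hBdef
      have hcard : A.card + B.card = U.card - 1 := by
        rw [hAdef, hBdef, Finset.card_filter_add_card_filter_not,
          Finset.card_erase_of_mem hv]
      have hAB : R1 ≤ A.card ∨ R2 ≤ B.card := by omega
      rcases hAB with hA | hB
      · rcases h1 G A hA with ⟨K, hKA, hK⟩ | ⟨I, hIA, hI⟩
        · refine Or.inl ⟨insert v K, ?_, hK.insert fun x hx => ?_⟩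
          · exact Finset.insert_subset hv
              (hKA.trans ((Finset.filter_subset _ _).trans (Finset.erase_subset _ _)))
          · exact (Finset.mem_filter.mp (hKA hx)).2
        · exact Or.inr ⟨I, hIA.trans ((Finset.filter_subset _ _).trans (Finset.erase_subset _ _)), hI⟩
      · rcases h2 G B hB with ⟨K, hKB, hK⟩ | ⟨I, hIB, hI⟩
        · exact Or.inl ⟨K, hKB.trans ((Finset.filter_subset _ _).trans (Finset.erase_subset _ _)), hK⟩
        · refine Or.inr ⟨insert v I, ?_, hI.insert fun x hx => ?_⟩
          · exact Finset.insert_subset hv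
              (hIB.trans ((Finset.filter_subset _ _).trans (Finset.erase_subset _ _)))
          · have hx' := Finset.mem_filter.mp (hIB hx)
            exact ⟨((Finset.mem_erase.mp hx'.1).1.symm : v ≠ x), hx'.2⟩

lemma common_small {n s t m T : ℕ}
    (G : SimpleGraph (Fin n))
    (hRam : ∀ (U : Finset (Fin n)), T ≤ U.card →
      (∃ K ⊆ U, G.IsNClique m K) ∨ (∃ I ⊆ U, Gᶜ.IsNClique t I))
    (hCF : G.CliqueFree m)
    (hind : ¬ HasInducedCopy (completeBipartiteGraph (Fin s) (Fin t)) G)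
    (A : Finset (Fin n)) (hA : A.card = s)
    (hAind : (Gᶜ).IsClique (A : Set (Fin n))) [DecidablePred (fun v => ∀ a ∈ A, G.Adj a v)] :
    (Finset.univ.filter (fun v => ∀ a ∈ A, G.Adj a v)).card < T := by
  classical
  by_contra hc
  push_neg at hc
  rcases hRam _ hc with ⟨K, _, hK⟩ | ⟨I, hIN, hI⟩
  · exact hCF K hK
  · have hIadj : ∀ x ∈ I, ∀ a ∈ A, G.Adj a x := fun x hx =>
      (Finset.mem_filter.mp (hIN hx)).2
    set eA : Fin s → Fin n := fun i => ↑(A.equivFin.symm (Fin.cast hA.symm i)) with heAdef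
    set eI : Fin t → Fin n := fun i => ↑(I.equivFin.symm (Fin.cast hI.2.symm i)) with heIdef
    have heA : ∀ i, eA i ∈ A := fun i => Finset.coe_mem _
    have heI : ∀ i, eI i ∈ I := fun i => Finset.coe_mem _
    have hAinj : Function.Injective eA := fun i j h => by
      simpa [Fin.ext_iff] using congrArg (A.equivFin) (Subtype.ext h)
    have hIinj : Function.Injective eI := fun i j h => by
      simpa [Fin.ext_iff] using congrArg (I.equivFin) (Subtype.ext h)
    have hdisj : ∀ x, x ∈ A → x ∈ I → False := fun x hxA hxI =>
      G.irrefl (hIadj x hxI x hxA)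
    set f : Fin s ⊕ Fin t → Fin n := Sum.elim eA eI with hf
    have hinj : Function.Injective f := by
      rintro (i|i) (j|j) h <;>
        simp only [hf, Sum.elim_inl, Sum.elim_inr] at h
      · exact congrArg Sum.inl (hAinj h)
      · exact absurd (heI j) (fun hj => hdisj _ (h ▸ heA i) hj)
      · exact absurd (heI i) (fun hi => hdisj _ (h ▸ heA j) hi)
      · exact congrArg Sum.inr (hIinj h)
    refine hind ⟨⟨⟨f, hinj⟩, ?_⟩⟩
    rintro (i|i) (j|j)
    · refine iff_of_false ?_ (by simp)
      intro h
      rcases eq_or_ne i j with rfl | hij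
      · exact G.irrefl h
      · exact (hAind (heA i) (heA j) (fun he => hij (hAinj he))).2 h
    · exact iff_of_true (hIadj _ (heI j) _ (heA i)) (by simp)
    · exact iff_of_true ((hIadj _ (heI i) _ (heA j)).symm) (by simp)
    · refine iff_of_false ?_ (by simp)
      intro h
      rcases eq_or_ne i j with rfl | hij
      · exact G.irrefl h
      · exact (hI.1 (heI i) (heI j) (fun he => hij (hIinj he))).2 h

lemma ind_count {n : ℕ} (G : SimpleGraph (Fin n)) (s T' : ℕ) (hsT' : s ≤ T')
    (U : Finset (Fin n))
    (hU : ∀ B ⊆ U, B.card = T' → ∃ A ⊆ B, A.card = s ∧ Gᶜ.IsClique (A : Set (Fin n)))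
    [DecidablePred (fun A : Finset (Fin n) => Gᶜ.IsClique (A : Set (Fin n)))] :
    U.card.choose s ≤ T'.choose s *
      (((U.powersetCard s).filter (fun A : Finset (Fin n) => Gᶜ.IsClique (A : Set (Fin n)))).card + 1) := by
  classical
  set ℐ := (U.powersetCard s).filter (fun A : Finset (Fin n) => Gᶜ.IsClique (A : Set (Fin n))) with hIdef
  rcases lt_or_ge U.card T' with h | h
  · calc U.card.choose s ≤ T'.choose s := Nat.choose_le_choose _ h.le
      _ ≤ _ := Nat.le_mul_of_pos_right _ (by omega)
  · have hcover : U.powersetCard T' ⊆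
        ℐ.biUnion (fun A => (U.powersetCard T').filter (fun B => A ⊆ B)) := by
      intro B hB
      obtain ⟨hBU, hBc⟩ := Finset.mem_powersetCard.mp hB
      obtain ⟨A, hAB, hAc, hAind⟩ := hU B hBU hBc
      exact Finset.mem_biUnion.mpr ⟨A,
        Finset.mem_filter.mpr ⟨Finset.mem_powersetCard.mpr ⟨hAB.trans hBU, hAc⟩, hAind⟩,
        Finset.mem_filter.mpr ⟨hB, hAB⟩⟩
    have hsub : ∀ A ∈ ℐ, ((U.powersetCard T').filter (fun B => A ⊆ B)).card ≤
        (U.card - s).choose (T' - s) := by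
      intro A hA
      obtain ⟨hAU, hAc⟩ := Finset.mem_powersetCard.mp (Finset.mem_filter.mp hA).1
      have hle : ((U.powersetCard T').filter (fun B => A ⊆ B)).card ≤
          ((U \ A).powersetCard (T' - s)).card := by
        apply Finset.card_le_card_of_injOn (fun B => B \ A)
        · intro B hB
          obtain ⟨hB1, hB2⟩ := Finset.mem_filter.mp hB
          obtain ⟨hBU, hBc⟩ := Finset.mem_powersetCard.mp hB1
          exact Finset.mem_powersetCard.mpr ⟨Finset.sdiff_subset_sdiff hBU (Finset.Subset.refl _),
            by rw [Finset.card_sdiff_of_subset hB2, hBc, hAc]⟩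
        · intro B1 h1 B2 h2 he
          have e1 := Finset.sdiff_union_of_subset (Finset.mem_filter.mp h1).2
          have e2 := Finset.sdiff_union_of_subset (Finset.mem_filter.mp h2).2
          rw [← e1, ← e2]
          simp only at he
          rw [he]
      simpa [Finset.card_sdiff_of_subset hAU, hAc, Finset.card_powersetCard] using hle
    have h1 : U.card.choose T' ≤ ℐ.card * (U.card - s).choose (T' - s) := by
      calc U.card.choose T' = (U.powersetCard T').card := (Finset.card_powersetCard _ _).symm
        _ ≤ (ℐ.biUnion (fun A => (U.powersetCard T').filter (fun B => A ⊆ B))).card :=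
            Finset.card_le_card hcover
        _ ≤ ∑ A ∈ ℐ, ((U.powersetCard T').filter (fun B => A ⊆ B)).card :=
            Finset.card_biUnion_le
        _ ≤ ∑ _A ∈ ℐ, (U.card - s).choose (T' - s) := Finset.sum_le_sum hsub
        _ = ℐ.card * (U.card - s).choose (T' - s) := by rw [Finset.sum_const, smul_eq_mul]
    have hid := Nat.choose_mul (n := U.card) hsT'
    have hpos : 0 < (U.card - s).choose (T' - s) := Nat.choose_pos (by omega)
    have hkey : U.card.choose s * ((U.card - s).choose (T' - s)) ≤
        (T'.choose s * (ℐ.card + 1)) * ((U.card - s).choose (T' - s)) := by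
      calc U.card.choose s * ((U.card - s).choose (T' - s))
          = U.card.choose T' * T'.choose s := hid.symm
        _ ≤ (ℐ.card * (U.card - s).choose (T' - s)) * T'.choose s :=
            Nat.mul_le_mul_right _ h1
        _ = (T'.choose s * ℐ.card) * ((U.card - s).choose (T' - s)) := by ring
        _ ≤ (T'.choose s * (ℐ.card + 1)) * ((U.card - s).choose (T' - s)) :=
            Nat.mul_le_mul_right _ (Nat.mul_le_mul_left _ (Nat.le_succ _))
    exact Nat.le_of_mul_le_mul_right hkey hpos

/-- **Corollary.** For any positive integers `s`, `t` and any fixed graph `H`,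
`ex(n, H, K_{s,t}-ind) = O(n^{2-1/s})`, the constant depending only on `H`, `s`, `t`. -/
theorem stmt3 (s t : ℕ) (hs : 0 < s) (ht : 0 < t)
    {W : Type*} [Fintype W] (H : SimpleGraph W) :
    ∃ C : ℝ, ∀ (n : ℕ) (G : SimpleGraph (Fin n)) [DecidableRel G.Adj],
      ¬ HasCopy H G →
      ¬ HasInducedCopy (completeBipartiteGraph (Fin s) (Fin t)) G →
      (G.edgeFinset.card : ℝ) ≤ C * (n : ℝ) ^ ((2 : ℝ) - 1 / s) := by
  classical
  set m := Fintype.card W with hm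
  obtain ⟨R₁, hR₁⟩ := myRamsey_s3 (m - 1) s
  obtain ⟨T, hT⟩ := myRamsey_s3 m t
  set T₀ := max R₁ s with hT₀def
  set K : ℝ := (Nat.factorial s : ℝ) * (T₀.choose s) * (T + 1) with hKdef
  have hK0 : 0 ≤ K := by positivity
  have hsR : (s : ℝ) ≠ 0 := Nat.cast_ne_zero.mpr hs.ne'
  have hs1R : (1 : ℝ) ≤ s := by exact_mod_cast hs
  have hexp1 : (1 : ℝ) ≤ 2 - 1 / s := by
    have : 1 / (s:ℝ) ≤ 1 := by
      rw [div_le_one (by positivity)]; exact hs1R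
    linarith
  refine ⟨K ^ ((1:ℝ) / s) + s, ?_⟩
  intro n G _ hcopy hind
  -- m ≥ 1
  have hm1 : 1 ≤ m := by
    rcases Nat.eq_zero_or_pos m with h0 | h
    · exfalso; apply hcopy
      have : IsEmpty W := Fintype.card_eq_zero_iff.mp h0
      exact ⟨fun a => isEmptyElim a, fun a => isEmptyElim a, fun a => isEmptyElim a⟩
    · exact h
  -- clique-freeness
  have hCF : G.CliqueFree m := by
    intro Kc hKc
    apply hcopy
    have hcard : Fintype.card W = Fintype.card {x // x ∈ Kc} := by
      rw [Fintype.card_coe, hKc.2]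
    have e : W ≃ {x // x ∈ Kc} := Fintype.equivOfCardEq hcard
    refine ⟨fun a => (e a : Fin n), ?_, ?_⟩
    · intro a b hab; exact e.injective (Subtype.ext hab)
    · intro a b hab
      exact hKc.1 (Finset.mem_coe.mpr (e a).2) (Finset.mem_coe.mpr (e b).2)
        (fun hEq => (hab.ne) (e.injective (Subtype.ext hEq)))
  -- trivial case n = 0
  rcases Nat.eq_zero_or_pos n with rfl | hn
  · have : G.edgeFinset = ∅ := Finset.eq_empty_of_isEmpty _
    rw [this]
    simp only [Finset.card_empty, Nat.cast_zero, Nat.cast_zero]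
    rw [Real.zero_rpow (by linarith : (2:ℝ) - 1/s ≠ 0), mul_zero]
  have hn1R : (1 : ℝ) ≤ n := by exact_mod_cast hn
  -- per-vertex Ramsey property inside neighborhoods
  have hnb : ∀ v : Fin n, ∀ B ⊆ G.neighborFinset v, B.card = T₀ →
      ∃ A ⊆ B, A.card = s ∧ Gᶜ.IsClique (A : Set (Fin n)) := by
    intro v B hBv hBc
    have hRB : R₁ ≤ B.card := by rw [hBc]; exact le_max_left _ _
    rcases hR₁ G B hRB with ⟨Kc, hKB, hKc⟩ | ⟨I, hIB, hIc⟩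
    · exfalso
      have hadj : ∀ b ∈ Kc, G.Adj v b := fun b hb =>
        (SimpleGraph.mem_neighborFinset _ _ _).mp (hBv (hKB hb))
      have hins := hKc.insert hadj
      rw [Nat.sub_add_cancel hm1] at hins
      exact hCF _ hins
    · exact ⟨I, hIB, hIc.2, hIc.1⟩
  -- per-vertex count of independent s-subsets
  have hdeg : ∀ v : Fin n, (G.degree v).choose s ≤ T₀.choose s *
      ((((G.neighborFinset v).powersetCard s).filter
        (fun A : Finset (Fin n) => Gᶜ.IsClique (A : Set (Fin n)))).card + 1) := by
    intro v
    have h := ind_count G s T₀ (le_max_right _ _) (G.neighborFinset v) (hnb v)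
    rwa [SimpleGraph.card_neighborFinset_eq_degree] at h
  -- the family of independent s-sets
  set 𝒜 := ((Finset.univ : Finset (Fin n)).powersetCard s).filter
    (fun A : Finset (Fin n) => Gᶜ.IsClique (A : Set (Fin n))) with h𝒜
  -- swap the double count
  have hswap : ∑ v : Fin n, (((G.neighborFinset v).powersetCard s).filter
        (fun A : Finset (Fin n) => Gᶜ.IsClique (A : Set (Fin n)))).card
      = ∑ A ∈ 𝒜, (Finset.univ.filter (fun v => ∀ a ∈ A, G.Adj a v)).card := by
    have hset : ∀ v : Fin n, ((G.neighborFinset v).powersetCard s).filter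
        (fun A : Finset (Fin n) => Gᶜ.IsClique (A : Set (Fin n)))
        = 𝒜.filter (fun A => ∀ a ∈ A, G.Adj a v) := by
      intro v
      ext A
      simp only [Finset.mem_filter, Finset.mem_powersetCard, h𝒜, Finset.subset_univ,
        true_and]
      constructor
      · rintro ⟨⟨hsub, hc⟩, hcl⟩
        exact ⟨⟨hc, hcl⟩, fun a ha => ((SimpleGraph.mem_neighborFinset _ _ _).mp (hsub ha)).symm⟩
      · rintro ⟨⟨hc, hcl⟩, hadj⟩
        exact ⟨⟨fun a ha => (SimpleGraph.mem_neighborFinset _ _ _).mpr (hadj a ha).symm, hc⟩, hcl⟩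
    calc ∑ v : Fin n, (((G.neighborFinset v).powersetCard s).filter
          (fun A : Finset (Fin n) => Gᶜ.IsClique (A : Set (Fin n)))).card
        = ∑ v : Fin n, (𝒜.filter (fun A => ∀ a ∈ A, G.Adj a v)).card := by
          exact Finset.sum_congr rfl (fun v _ => congrArg Finset.card (hset v))
      _ = ∑ v : Fin n, ∑ A ∈ 𝒜, if (∀ a ∈ A, G.Adj a v) then 1 else 0 := by
          exact Finset.sum_congr rfl (fun v _ => Finset.card_filter _ _)
      _ = ∑ A ∈ 𝒜, ∑ v : Fin n, if (∀ a ∈ A, G.Adj a v) then 1 else 0 := Finset.sum_comm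
      _ = ∑ A ∈ 𝒜, (Finset.univ.filter (fun v => ∀ a ∈ A, G.Adj a v)).card := by
          exact Finset.sum_congr rfl (fun A _ => (Finset.card_filter _ _).symm)
  -- each common neighborhood is small
  have hcsmall : ∀ A ∈ 𝒜, (Finset.univ.filter (fun v => ∀ a ∈ A, G.Adj a v)).card ≤ T := by
    intro A hA
    obtain ⟨hA1, hA2⟩ := Finset.mem_filter.mp hA
    have hAc : A.card = s := (Finset.mem_powersetCard.mp hA1).2
    exact (common_small G (fun U hU => hT G U hU) hCF hind A hAc hA2).le
  have h𝒜card : 𝒜.card ≤ n.choose s := by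
    calc 𝒜.card ≤ ((Finset.univ : Finset (Fin n)).powersetCard s).card :=
          Finset.card_filter_le _ _
      _ = n.choose s := by rw [Finset.card_powersetCard, Finset.card_univ, Fintype.card_fin]
  -- the big natural-number inequality
  have hNat : ∑ v : Fin n, (G.degree v).choose s ≤
      T₀.choose s * (T * n.choose s + n) := by
    calc ∑ v : Fin n, (G.degree v).choose s
        ≤ ∑ v : Fin n, T₀.choose s * ((((G.neighborFinset v).powersetCard s).filter
            (fun A : Finset (Fin n) => Gᶜ.IsClique (A : Set (Fin n)))).card + 1) :=
          Finset.sum_le_sum (fun v _ => hdeg v)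
      _ = T₀.choose s * ((∑ v : Fin n, (((G.neighborFinset v).powersetCard s).filter
            (fun A : Finset (Fin n) => Gᶜ.IsClique (A : Set (Fin n)))).card) + n) := by
          rw [← Finset.mul_sum, Finset.sum_add_distrib, Finset.sum_const, Finset.card_univ,
            Fintype.card_fin, smul_eq_mul, mul_one]
      _ ≤ T₀.choose s * (T * n.choose s + n) := by
          apply Nat.mul_le_mul_left
          apply Nat.add_le_add_right
          rw [hswap]
          calc ∑ A ∈ 𝒜, (Finset.univ.filter (fun v => ∀ a ∈ A, G.Adj a v)).card
              ≤ ∑ _A ∈ 𝒜, T := Finset.sum_le_sum hcsmall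
            _ = 𝒜.card * T := by rw [Finset.sum_const, smul_eq_mul]
            _ ≤ n.choose s * T := Nat.mul_le_mul_right _ h𝒜card
            _ = T * n.choose s := Nat.mul_comm _ _
  -- pointwise: (d - s)^s ≤ s! * choose d s
  have hpoint : ∀ v : Fin n, (G.degree v - s)^s ≤ s.factorial * (G.degree v).choose s := by
    intro v
    calc (G.degree v - s)^s ≤ (G.degree v + 1 - s)^s :=
          Nat.pow_le_pow_left (Nat.sub_le_sub_right (Nat.le_succ _) s) s
      _ ≤ (G.degree v).descFactorial s := Nat.pow_sub_le_descFactorial _ _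
      _ = s.factorial * (G.degree v).choose s := Nat.descFactorial_eq_factorial_mul_choose _ _
  have hSd : ∑ v : Fin n, (G.degree v - s)^s ≤
      s.factorial * (T₀.choose s * (T * n.choose s + n)) := by
    calc ∑ v : Fin n, (G.degree v - s)^s ≤ ∑ v : Fin n, s.factorial * (G.degree v).choose s :=
          Finset.sum_le_sum (fun v _ => hpoint v)
      _ = s.factorial * ∑ v : Fin n, (G.degree v).choose s := by rw [Finset.mul_sum]
      _ ≤ _ := Nat.mul_le_mul_left _ hNat
  -- move to the reals
  set g : Fin n → ℝ := fun v => ((G.degree v - s : ℕ) : ℝ) with hg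
  have hg0 : ∀ v ∈ (Finset.univ : Finset (Fin n)), 0 ≤ g v := fun v _ => Nat.cast_nonneg _
  have hSdR : (((∑ v : Fin n, (G.degree v - s)^s : ℕ)) : ℝ) ≤
      (s.factorial : ℝ) * ((T₀.choose s : ℝ) * ((T:ℝ) * (n.choose s : ℝ) + (n:ℝ))) := by
    exact_mod_cast Nat.cast_le.mpr hSd
  have hnpow : (n:ℝ) ≤ (n:ℝ)^(s:ℕ) := by
    calc (n:ℝ) = (n:ℝ)^(1:ℕ) := (pow_one _).symm
      _ ≤ (n:ℝ)^(s:ℕ) := pow_le_pow_right₀ hn1R hs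
  have hchoose : ((n.choose s : ℕ) : ℝ) ≤ (n:ℝ)^(s:ℕ) := by
    have h1 := Nat.choose_le_pow_div (α := ℝ) s n
    have h2 : (1:ℝ) ≤ (s.factorial : ℝ) := by exact_mod_cast s.factorial_pos
    calc ((n.choose s : ℕ):ℝ) ≤ (n:ℝ)^s / (s.factorial:ℝ) := h1
      _ ≤ (n:ℝ)^s := by
        rw [div_le_iff₀ (by positivity)]
        nlinarith [pow_nonneg (Nat.cast_nonneg (α := ℝ) n) s]
  have hsum_g_pow : ∑ v : Fin n, (g v)^s ≤ K * (n:ℝ)^(s:ℕ) := by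
    have heq : ∑ v : Fin n, (g v)^s = ((∑ v : Fin n, (G.degree v - s)^s : ℕ) : ℝ) := by
      push_cast
      rfl
    rw [heq]
    refine hSdR.trans ?_
    calc (s.factorial : ℝ) * ((T₀.choose s : ℝ) * ((T:ℝ) * (n.choose s : ℝ) + (n:ℝ)))
        ≤ (s.factorial : ℝ) * ((T₀.choose s : ℝ) * ((T:ℝ) * (n:ℝ)^(s:ℕ) + (n:ℝ)^(s:ℕ))) := by
          gcongr
      _ = K * (n:ℝ)^(s:ℕ) := by rw [hKdef]; ring
  -- Jensen
  have hJ : (∑ v : Fin n, g v)^(s:ℕ) ≤ K * (n:ℝ)^(2*s - 1 : ℕ) := by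
    have hj := pow_sum_div_card_le_sum_pow (s := (Finset.univ : Finset (Fin n))) hg0 (s - 1)
    rw [Nat.sub_add_cancel hs] at hj
    have hcard : ((Finset.univ : Finset (Fin n)).card : ℝ) = (n : ℝ) := by
      rw [Finset.card_univ, Fintype.card_fin]
    rw [hcard] at hj
    rw [div_le_iff₀ (by positivity)] at hj
    calc (∑ v : Fin n, g v)^(s:ℕ) ≤ (∑ v : Fin n, (g v)^s) * (n:ℝ)^(s-1 : ℕ) := hj
      _ ≤ (K * (n:ℝ)^(s:ℕ)) * (n:ℝ)^(s-1 : ℕ) :=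
          mul_le_mul_of_nonneg_right hsum_g_pow (by positivity)
      _ = K * (n:ℝ)^(2*s - 1 : ℕ) := by
          rw [mul_assoc, ← pow_add]
          congr 2
          omega
  -- lower bound for ∑ g
  have hglow : 2 * (G.edgeFinset.card : ℝ) - s * n ≤ ∑ v : Fin n, g v := by
    have hsum : ∑ v : Fin n, (G.degree v : ℝ) = 2 * (G.edgeFinset.card : ℝ) := by
      have := SimpleGraph.sum_degrees_eq_twice_card_edges G
      exact_mod_cast congrArg (Nat.cast : ℕ → ℝ) this
    have hterm : ∀ v : Fin n, (G.degree v : ℝ) - s ≤ g v := by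
      intro v
      rcases le_or_gt s (G.degree v) with h | h
      · rw [hg]; simp only; rw [Nat.cast_sub h]
      · have : G.degree v - s = 0 := Nat.sub_eq_zero_of_le h.le
        rw [hg]; simp only [this, Nat.cast_zero]
        have : (G.degree v : ℝ) ≤ s := by exact_mod_cast h.le
        linarith
    calc 2 * (G.edgeFinset.card : ℝ) - s * n
        = ∑ v : Fin n, ((G.degree v : ℝ) - s) := by
          rw [Finset.sum_sub_distrib, hsum, Finset.sum_const, Finset.card_univ,
            Fintype.card_fin, nsmul_eq_mul]
          ring
      _ ≤ ∑ v : Fin n, g v := Finset.sum_le_sum (fun v _ => hterm v)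
  -- the rpow endgame
  set X := ∑ v : Fin n, g v with hX
  have hX0 : 0 ≤ X := Finset.sum_nonneg hg0
  have hrhs0 : (0:ℝ) ≤ K * (n:ℝ)^(2*s-1:ℕ) := by positivity
  have hXle : X ≤ K ^ ((1:ℝ)/s) * (n:ℝ) ^ ((2:ℝ) - 1/s) := by
    have h1 : X = (X ^ ((s:ℕ):ℝ)) ^ ((1:ℝ)/s) := by
      rw [← Real.rpow_mul hX0, mul_one_div]
      push_cast
      rw [div_self hsR, Real.rpow_one]
    have h2 : (X ^ ((s:ℕ):ℝ)) ^ ((1:ℝ)/s) ≤ (K * (n:ℝ)^(2*s-1:ℕ)) ^ ((1:ℝ)/s) := by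
      apply Real.rpow_le_rpow (by positivity) _ (by positivity)
      rw [Real.rpow_natCast]
      exact hJ
    have h3 : (K * (n:ℝ)^(2*s-1:ℕ)) ^ ((1:ℝ)/s)
        = K ^ ((1:ℝ)/s) * (n:ℝ) ^ ((2:ℝ) - 1/s) := by
      rw [Real.mul_rpow hK0 (by positivity)]
      congr 1
      rw [← Real.rpow_natCast (n:ℝ) (2*s-1), ← Real.rpow_mul (Nat.cast_nonneg n)]
      congr 1
      have hc : ((2*s-1 : ℕ) : ℝ) = 2*(s:ℝ) - 1 := by
        have : (1:ℕ) ≤ 2*s := by omega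
        push_cast [Nat.cast_sub this]
        ring
      rw [hc]
      field_simp
    rw [h1]
    rw [h3] at h2
    exact h2
  have hnle : (n:ℝ) ≤ (n:ℝ) ^ ((2:ℝ) - 1/s) := by
    calc (n:ℝ) = (n:ℝ) ^ (1:ℝ) := (Real.rpow_one _).symm
      _ ≤ (n:ℝ) ^ ((2:ℝ) - 1/s) := Real.rpow_le_rpow_of_exponent_le hn1R hexp1
  have hE0 : (0:ℝ) ≤ (G.edgeFinset.card : ℝ) := Nat.cast_nonneg _
  have hfinal : 2 * (G.edgeFinset.card : ℝ) ≤
      (K ^ ((1:ℝ)/s) + s) * (n:ℝ) ^ ((2:ℝ) - 1/s) := by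
    have : 2 * (G.edgeFinset.card : ℝ) ≤ X + s * n := by linarith
    calc 2 * (G.edgeFinset.card : ℝ) ≤ X + s * n := this
      _ ≤ K ^ ((1:ℝ)/s) * (n:ℝ) ^ ((2:ℝ) - 1/s) + s * (n:ℝ) ^ ((2:ℝ) - 1/s) := by
          have : (s:ℝ) * n ≤ s * (n:ℝ) ^ ((2:ℝ) - 1/s) :=
            mul_le_mul_of_nonneg_left hnle (by positivity)
          linarith
      _ = (K ^ ((1:ℝ)/s) + s) * (n:ℝ) ^ ((2:ℝ) - 1/s) := by ring
  linarith
end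

section
/- Let t ≥ 2 be an integer. If G is a graph with n vertices, minimum degree d, and no induced copy of K_{2,t+1}, then the clique number of G satisfies ω(G) ≥ (d²/(2nt) · (1 − o(1)))^{1/t} − t. More precisely, ω(G) ≥ (d²/(2n) · (1 − 2/n^{1/t}))^{1/t} − t. -/
open SimpleGraph Finset

variable {n : ℕ}

/-- The set of common neighbours of `x` and `y`. -/
def codegF (G : SimpleGraph (Fin n)) [DecidableRel G.Adj] (x y : Fin n) : Finset (Fin n) :=
  univ.filter fun z => G.Adj x z ∧ G.Adj y z

lemma ramsey_aux (G : SimpleGraph (Fin n)) [DecidableRel G.Adj] :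
    ∀ (fuel a b : ℕ) (W : Finset (Fin n)), a + b ≤ fuel → (a + b).choose a ≤ W.card →
      (∃ s : Finset (Fin n), s ⊆ W ∧ s.card = a + 1 ∧ G.IsClique (s : Set (Fin n))) ∨
      (∃ s : Finset (Fin n), s ⊆ W ∧ s.card = b + 1 ∧ Gᶜ.IsClique (s : Set (Fin n))) := by
  intro fuel
  induction fuel with
  | zero =>
    intro a b W hab hW
    have ha : a = 0 := by omega
    have hb : b = 0 := by omega
    subst ha; subst hb
    simp only [Nat.choose_self] at hW
    obtain ⟨v, hv⟩ := Finset.card_pos.mp (show 0 < W.card by omega)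
    exact Or.inl ⟨{v}, by simpa using hv, by simp, by simp⟩
  | succ m ih =>
    intro a b W hab hW
    match a, b with
    | 0, b =>
      have : 1 ≤ W.card := le_trans (by simp [Nat.choose_zero_right]) hW
      obtain ⟨v, hv⟩ := Finset.card_pos.mp (show 0 < W.card by omega)
      exact Or.inl ⟨{v}, by simpa using hv, by simp, by simp⟩
    | (a+1), 0 =>
      have : 1 ≤ W.card := le_trans (by simp) hW
      obtain ⟨v, hv⟩ := Finset.card_pos.mp (show 0 < W.card by omega)
      exact Or.inr ⟨{v}, by simpa using hv, by simp, by simp⟩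
    | (a+1), (b+1) =>
      have hWpos : 0 < W.card := lt_of_lt_of_le (Nat.choose_pos (by omega)) hW
      obtain ⟨v, hv⟩ := Finset.card_pos.mp hWpos
      set A := (W.erase v).filter (fun w => G.Adj v w) with hA
      set B := (W.erase v).filter (fun w => ¬ G.Adj v w) with hB
      have hsplit : A.card + B.card = W.card - 1 := by
        rw [hA, hB, Finset.card_filter_add_card_filter_not, Finset.card_erase_of_mem hv]
      have hpascal : (a + 1 + (b + 1)).choose (a + 1)
          = (a + (b+1)).choose a + (a + 1 + b).choose (a+1) := by
        have : a + 1 + (b + 1) = (a + (b+1)) + 1 := by omega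
        rw [this, Nat.choose_succ_succ' ]
        congr 2
        omega
      have hcase : (a + (b+1)).choose a ≤ A.card ∨ (a + 1 + b).choose (a+1) ≤ B.card := by
        by_contra hc
        push_neg at hc
        omega
      rcases hcase with hA' | hB'
      · rcases ih a (b+1) A (by omega) hA' with ⟨s, hsA, hcard, hclq⟩ | ⟨s, hsA, hcard, hclq⟩
        · left
          refine ⟨insert v s, ?_, ?_, ?_⟩
          · intro x hx
            rcases Finset.mem_insert.mp hx with rfl | hx
            · exact hv
            · exact Finset.mem_of_mem_erase (Finset.mem_of_mem_filter _ (hsA hx))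
          · rw [Finset.card_insert_of_notMem, hcard]
            intro hvs
            have := hsA hvs
            simp [hA] at this
          · rw [Finset.coe_insert]
            refine hclq.insert ?_
            intro b hb _
            have := hsA hb
            rw [hA, Finset.mem_filter] at this
            exact this.2
        · right
          exact ⟨s, fun x hx => Finset.mem_of_mem_erase (Finset.mem_of_mem_filter _ (hsA hx)), hcard, hclq⟩
      · rcases ih (a+1) b B (by omega) hB' with ⟨s, hsB, hcard, hclq⟩ | ⟨s, hsB, hcard, hclq⟩
        · left
          exact ⟨s, fun x hx => Finset.mem_of_mem_erase (Finset.mem_of_mem_filter _ (hsB hx)), hcard, hclq⟩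
        · right
          refine ⟨insert v s, ?_, ?_, ?_⟩
          · intro x hx
            rcases Finset.mem_insert.mp hx with rfl | hx
            · exact hv
            · exact Finset.mem_of_mem_erase (Finset.mem_of_mem_filter _ (hsB hx))
          · rw [Finset.card_insert_of_notMem, hcard]
            intro hvs
            have := hsB hvs
            simp [hB] at this
          · rw [Finset.coe_insert]
            refine hclq.insert ?_
            intro w hw hne
            have := hsB hw
            rw [hB, Finset.mem_filter] at this
            rw [SimpleGraph.compl_adj]
            refine ⟨hne, this.2⟩

lemma embedding_of_indep (G : SimpleGraph (Fin n)) [DecidableRel G.Adj] (t : ℕ)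
    (x y : Fin n) (hne : x ≠ y) (hnadj : ¬ G.Adj x y)
    (s : Finset (Fin n)) (hsub : s ⊆ codegF G x y) (hcard : s.card = t + 1)
    (hindep : Gᶜ.IsClique (s : Set (Fin n))) :
    HasInducedCopy (completeBipartiteGraph (Fin 2) (Fin (t + 1))) G := by
  have e : Fin (t+1) ≃o {z // z ∈ s} := s.orderIsoOfFin hcard
  have hadjx : ∀ z ∈ s, G.Adj x z := fun z hz => ((Finset.mem_filter.mp (hsub hz)).2).1
  have hadjy : ∀ z ∈ s, G.Adj y z := fun z hz => ((Finset.mem_filter.mp (hsub hz)).2).2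
  have hnadj' : ∀ z ∈ s, ∀ w ∈ s, z ≠ w → ¬ G.Adj z w := by
    intro z hz w hw hzw
    have := hindep (by simpa using hz) (by simpa using hw) hzw
    rw [SimpleGraph.compl_adj] at this
    exact this.2
  classical
  let f : Fin 2 ⊕ Fin (t+1) → Fin n := Sum.elim (fun i => if i = 0 then x else y)
    (fun j => (e j : Fin n))
  have hmem : ∀ j : Fin (t+1), (e j : Fin n) ∈ s := fun j => (e j).2
  have hinj : Function.Injective f := by
    intro p q hpq
    rcases p with i | j <;> rcases q with i' | j'
    · simp only [f, Sum.elim_inl] at hpq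
      fin_cases i <;> fin_cases i' <;> simp_all <;> omega
    · exfalso
      simp only [f, Sum.elim_inl, Sum.elim_inr] at hpq
      by_cases hi : i = 0
      · rw [if_pos hi] at hpq
        exact G.irrefl (hpq ▸ hadjx _ (hmem j'))
      · rw [if_neg hi] at hpq
        exact G.irrefl (hpq ▸ hadjy _ (hmem j'))
    · exfalso
      simp only [f, Sum.elim_inl, Sum.elim_inr] at hpq
      by_cases hi : i' = 0
      · rw [if_pos hi] at hpq
        exact G.irrefl (hpq ▸ hadjx _ (hmem j)).symm
      · rw [if_neg hi] at hpq
        exact G.irrefl (hpq ▸ hadjy _ (hmem j)).symm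
    · simp only [f, Sum.elim_inr] at hpq
      have : e j = e j' := Subtype.ext hpq
      simpa using e.injective this
  refine ⟨⟨⟨f, hinj⟩, ?_⟩⟩
  · intro p q
    rcases p with i | j <;> rcases q with i' | j'
    · constructor
      · intro h
        exfalso
        simp only [f, Sum.elim_inl] at h
        by_cases hi : i = 0 <;> by_cases hi' : i' = 0 <;>
          simp [hi, hi'] at h <;>
          first
            | exact G.irrefl h
            | exact hnadj h
            | exact hnadj h.symm
      · intro h; simp at h
    · constructor
      · intro _; simp
      · intro _
        show G.Adj (if i = 0 then x else y) (e j' : Fin n)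
        by_cases hi : i = 0
        · rw [if_pos hi]; exact hadjx _ (hmem j')
        · rw [if_neg hi]; exact hadjy _ (hmem j')
    · constructor
      · intro _; simp
      · intro _
        show G.Adj (e j : Fin n) (if i' = 0 then x else y)
        by_cases hi : i' = 0
        · rw [if_pos hi]; exact (hadjx _ (hmem j)).symm
        · rw [if_neg hi]; exact (hadjy _ (hmem j)).symm
    · constructor
      · intro h
        exfalso
        simp only [f, Sum.elim_inr] at h
        by_cases hjj : j = j'
        · subst hjj; exact G.irrefl h
        · refine hnadj' _ (hmem j) _ (hmem j') ?_ h
          intro hv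
          exact hjj (e.injective (Subtype.ext hv))
      · intro h; simp at h

lemma local_edge_bound (G : SimpleGraph (Fin n)) [DecidableRel G.Adj] (C K : ℕ)
    (hcode : ∀ x y : Fin n, x ≠ y → ¬ G.Adj x y → (codegF G x y).card ≤ C) :
    ∀ (s : Finset (Fin n)), (∀ u ⊆ s, G.IsClique (u : Set (Fin n)) → u.card ≤ K) →
      2 * (∑ z ∈ s, (s.filter (fun w => G.Adj z w)).card) ≤ s.card * (s.card + 2*C + 2*K) := by
  intro s
  induction s using Finset.strongInduction with
  | _ s ih =>
    intro hK
    by_cases hpair : ∃ x ∈ s, ∃ y ∈ s, x ≠ y ∧ ¬ G.Adj x y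
    · obtain ⟨x, hx, y, hy, hxy, hnadj⟩ := hpair
      set s' := (s.erase x).erase y with hs'
      have hyex : y ∈ s.erase x := Finset.mem_erase.mpr ⟨Ne.symm hxy, hy⟩
      have hxns' : x ∉ s' := fun h => (Finset.mem_erase.mp (Finset.mem_of_mem_erase h)).1 rfl
      have hyns' : y ∉ s' := fun h => (Finset.mem_erase.mp h).1 rfl
      have hxnins : x ∉ insert y s' := by
        simp only [Finset.mem_insert]
        rintro (rfl | h)
        · exact hxy rfl
        · exact hxns' h
      have hins : s = insert x (insert y s') := by
        rw [hs', Finset.insert_erase hyex, Finset.insert_erase hx]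
      have hcard : s.card = s'.card + 2 := by
        rw [hins, Finset.card_insert_of_notMem hxnins, Finset.card_insert_of_notMem hyns']
      -- decompose filter cards
      have hfilter : ∀ z : Fin n, (s.filter (fun w => G.Adj z w)).card
          = ((if G.Adj z x then 1 else 0) + (if G.Adj z y then 1 else 0))
            + (s'.filter (fun w => G.Adj z w)).card := by
        intro z
        have hyF : y ∉ s'.filter (fun w => G.Adj z w) := fun h => hyns' (Finset.mem_of_mem_filter _ h)
        have hxF : x ∉ s'.filter (fun w => G.Adj z w) := fun h => hxns' (Finset.mem_of_mem_filter _ h)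
        have hxyF : x ∉ insert y (s'.filter (fun w => G.Adj z w)) := by
          simp only [Finset.mem_insert]
          rintro (rfl | h)
          · exact hxy rfl
          · exact hxF h
        rw [hins, Finset.filter_insert, Finset.filter_insert]
        by_cases h1 : G.Adj z x <;> by_cases h2 : G.Adj z y <;>
          simp only [h1, h2, if_true, if_false]
        · rw [Finset.card_insert_of_notMem hxyF, Finset.card_insert_of_notMem hyF]; omega
        · rw [Finset.card_insert_of_notMem hxF]; omega
        · rw [Finset.card_insert_of_notMem hyF]; omega
        · omega
      -- define quantities
      set ax := (s'.filter (fun w => G.Adj x w)).card with hax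
      set ay := (s'.filter (fun w => G.Adj y w)).card with hay
      have hgx : (s.filter (fun w => G.Adj x w)).card = ax := by
        rw [hfilter x, if_neg (G.irrefl), if_neg hnadj]; omega
      have hgy : (s.filter (fun w => G.Adj y w)).card = ay := by
        rw [hfilter y, if_neg (fun h => hnadj h.symm), if_neg (G.irrefl)]; omega
      have hsum1 : ∀ w : Fin n, (∑ z ∈ s', (if G.Adj z w then 1 else 0))
          = (s'.filter (fun z => G.Adj z w)).card := by
        intro w
        rw [Finset.card_filter]
      have hswx : (s'.filter (fun z => G.Adj z x)).card = ax := by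
        rw [hax]
        congr 1
        apply Finset.filter_congr
        intro z _
        simp [G.adj_comm]
      have hswy : (s'.filter (fun z => G.Adj z y)).card = ay := by
        rw [hay]
        congr 1
        apply Finset.filter_congr
        intro z _
        simp [G.adj_comm]
      have hsum : (∑ z ∈ s, (s.filter (fun w => G.Adj z w)).card)
          = 2*ax + 2*ay + (∑ z ∈ s', (s'.filter (fun w => G.Adj z w)).card) := by
        calc (∑ z ∈ s, (s.filter (fun w => G.Adj z w)).card)
            = (s.filter (fun w => G.Adj x w)).card + ((s.filter (fun w => G.Adj y w)).card
              + (∑ z ∈ s', (s.filter (fun w => G.Adj z w)).card)) := by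
              rw [hins, Finset.sum_insert hxnins, Finset.sum_insert hyns']
          _ = ax + (ay + (∑ z ∈ s', ((if G.Adj z x then 1 else 0) + (if G.Adj z y then 1 else 0)
                + (s'.filter (fun w => G.Adj z w)).card))) := by
              rw [hgx, hgy]
              congr 1
              congr 1
              apply Finset.sum_congr rfl
              intro z _
              rw [hfilter z]
          _ = 2*ax + 2*ay + (∑ z ∈ s', (s'.filter (fun w => G.Adj z w)).card) := by
              rw [Finset.sum_add_distrib, Finset.sum_add_distrib, hsum1 x, hsum1 y, hswx, hswy]
              ring
      have haxy : ax + ay ≤ s'.card + C := by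
        have hunion := Finset.card_union_add_card_inter
          (s'.filter (fun w => G.Adj x w)) (s'.filter (fun w => G.Adj y w))
        have h1 : (s'.filter (fun w => G.Adj x w) ∪ s'.filter (fun w => G.Adj y w)).card ≤ s'.card :=
          Finset.card_le_card (Finset.union_subset (Finset.filter_subset _ _) (Finset.filter_subset _ _))
        have h2 : (s'.filter (fun w => G.Adj x w) ∩ s'.filter (fun w => G.Adj y w)).card
            ≤ (codegF G x y).card := by
          apply Finset.card_le_card
          intro z hz
          rw [Finset.mem_inter, Finset.mem_filter, Finset.mem_filter] at hz
          exact Finset.mem_filter.mpr ⟨Finset.mem_univ z, hz.1.2, hz.2.2⟩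
        have h3 := hcode x y hxy hnadj
        omega
      have hss : s' ⊂ s := by
        refine Finset.ssubset_of_subset_of_ssubset ?_ (Finset.erase_ssubset hx)
        rw [hs']
        exact Finset.erase_subset _ _
      have hIH := ih s' hss (fun u hu hc => hK u (hu.trans hss.subset) hc)
      -- final arithmetic
      rw [hsum, hcard]
      set m := s'.card with hm
      set D' := (∑ z ∈ s', (s'.filter (fun w => G.Adj z w)).card) with hD'
      have hring : (m+2) * ((m+2) + 2*C + 2*K) = m * (m + 2*C + 2*K) + 4*m + 4*C + 4*K + 4 := by
        ring
      rw [hring]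
      set X := m * (m + 2*C + 2*K) with hX
      omega
    · push_neg at hpair
      have hclq : G.IsClique (s : Set (Fin n)) := by
        intro a ha b hb hab
        exact hpair a (by simpa using ha) b (by simpa using hb) hab
      have hcardK : s.card ≤ K := hK s subset_rfl hclq
      have hper : ∀ z ∈ s, (s.filter (fun w => G.Adj z w)).card + 1 ≤ s.card := by
        intro z hz
        have hsub : s.filter (fun w => G.Adj z w) ⊆ s.erase z := by
          intro w hw
          rw [Finset.mem_filter] at hw
          exact Finset.mem_erase.mpr ⟨(G.ne_of_adj hw.2).symm, hw.1⟩
        have := Finset.card_le_card hsub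
        rw [Finset.card_erase_of_mem hz] at this
        have hpos : 1 ≤ s.card := Finset.card_pos.mpr ⟨z, hz⟩
        omega
      have hsum : (∑ z ∈ s, (s.filter (fun w => G.Adj z w)).card) + s.card ≤ s.card * s.card := by
        calc (∑ z ∈ s, (s.filter (fun w => G.Adj z w)).card) + s.card
            = ∑ z ∈ s, ((s.filter (fun w => G.Adj z w)).card + 1) := by
              rw [Finset.sum_add_distrib]
              simp
          _ ≤ ∑ _z ∈ s, s.card := Finset.sum_le_sum hper
          _ = s.card * s.card := by rw [Finset.sum_const, smul_eq_mul]
      have h2 : s.card * s.card ≤ s.card * K := Nat.mul_le_mul_left _ hcardK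
      have hring : s.card * (s.card + 2*C + 2*K) = s.card*s.card + 2*(s.card*C) + 2*(s.card*K) := by
        ring
      rw [hring]
      set SS := s.card * s.card with hSS
      set SK := s.card * K with hSK
      set SC := s.card * C with hSC
      omega

lemma codeg_le (G : SimpleGraph (Fin n)) [DecidableRel G.Adj] (t : ℕ)
    (hind : ¬ HasInducedCopy (completeBipartiteGraph (Fin 2) (Fin (t + 1))) G)
    (x y : Fin n) (hne : x ≠ y) (hnadj : ¬ G.Adj x y) :
    (codegF G x y).card ≤ (G.cliqueNum + t).choose t := by
  set k := G.cliqueNum with hk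
  by_contra h
  have hW : (k + t).choose k ≤ (codegF G x y).card := by
    have hs := Nat.choose_symm (show t ≤ k + t by omega)
    rw [Nat.add_sub_cancel] at hs
    omega
  rcases ramsey_aux G (k + t) k t (codegF G x y) le_rfl hW with
    ⟨s, _, hcard, hclq⟩ | ⟨s, hsub, hcard, hclq⟩
  · have := hclq.card_le_cliqueNum
    omega
  · exact hind (embedding_of_indep G t x y hne hnadj s hsub hcard hclq)

lemma key_choose (k t : ℕ) (ht : 2 ≤ t) :
    (k + t).choose t + k ≤ (k + t) ^ t := by
  have h1 : ∀ m : ℕ, m + 1 ≤ (m + t).choose t := by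
    intro m
    induction m with
    | zero => simp
    | succ m ihm =>
      obtain ⟨t', rfl⟩ : ∃ t', t = t' + 1 := ⟨t - 1, by omega⟩
      have hp : (m + 1 + (t' + 1)).choose (t' + 1)
          = (m + (t' + 1)).choose t' + (m + (t' + 1)).choose (t' + 1) := by
        have : m + 1 + (t' + 1) = (m + (t' + 1)) + 1 := by omega
        rw [this, Nat.choose_succ_succ]
      have hpos : 0 < (m + (t' + 1)).choose t' := Nat.choose_pos (by omega)
      omega
  have h2 : 2 * ((k + t).choose t) ≤ (k + t) ^ t := by
    have hd : (k + t).descFactorial t = Nat.factorial t * (k + t).choose t :=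
      Nat.descFactorial_eq_factorial_mul_choose _ _
    have hdp : (k + t).descFactorial t ≤ (k + t) ^ t := Nat.descFactorial_le_pow _ _
    have hf : 2 ≤ Nat.factorial t := le_trans ht (Nat.self_le_factorial t)
    have : 2 * ((k + t).choose t) ≤ Nat.factorial t * ((k + t).choose t) :=
      Nat.mul_le_mul_right _ hf
    omega
  have := h1 k
  omega
section counting
variable (G : SimpleGraph (Fin n)) [DecidableRel G.Adj]

/-- nonadjacent "partners" within the neighbourhood, summed. -/
def Asum (v : Fin n) : ℕ :=
  ∑ x ∈ G.neighborFinset v,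
    ((G.neighborFinset v).filter (fun y => x ≠ y ∧ ¬ G.Adj x y)).card

def Dsum (v : Fin n) : ℕ :=
  ∑ x ∈ G.neighborFinset v, ((G.neighborFinset v).filter (fun y => G.Adj x y)).card

lemma pervertex_partition (v : Fin n) :
    Asum G v + Dsum G v + G.degree v = G.degree v * G.degree v := by
  have hper : ∀ x ∈ G.neighborFinset v,
      ((G.neighborFinset v).filter (fun y => G.Adj x y)).card
        + ((G.neighborFinset v).filter (fun y => x ≠ y ∧ ¬ G.Adj x y)).card + 1
      = G.degree v := by
    intro x hx
    set N := G.neighborFinset v with hN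
    have e1 : N.filter (fun y => G.Adj x y) = (N.erase x).filter (fun y => G.Adj x y) := by
      ext y
      simp only [Finset.mem_filter, Finset.mem_erase]
      constructor
      · rintro ⟨h1, h2⟩; exact ⟨⟨(G.ne_of_adj h2).symm, h1⟩, h2⟩
      · rintro ⟨⟨_, h1⟩, h2⟩; exact ⟨h1, h2⟩
    have e2 : N.filter (fun y => x ≠ y ∧ ¬ G.Adj x y)
        = (N.erase x).filter (fun y => ¬ G.Adj x y) := by
      ext y
      simp only [Finset.mem_filter, Finset.mem_erase]
      constructor
      · rintro ⟨h1, h2, h3⟩; exact ⟨⟨Ne.symm h2, h1⟩, h3⟩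
      · rintro ⟨⟨h1, h2⟩, h3⟩; exact ⟨h2, Ne.symm h1, h3⟩
    have hsplit := Finset.card_filter_add_card_filter_not
      (s := N.erase x) (p := fun y => G.Adj x y)
    rw [Finset.card_erase_of_mem hx] at hsplit
    have hpos : 1 ≤ N.card := Finset.card_pos.mpr ⟨x, hx⟩
    rw [e1, e2]
    have hdeg : N.card = G.degree v := G.card_neighborFinset_eq_degree v
    omega
  have hsum := Finset.sum_congr rfl hper
  rw [Finset.sum_add_distrib, Finset.sum_add_distrib, Finset.sum_const, smul_eq_mul, mul_one]
    at hsum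
  rw [Finset.sum_const, smul_eq_mul, G.card_neighborFinset_eq_degree v] at hsum
  have hA : Asum G v = ∑ x ∈ G.neighborFinset v,
      ((G.neighborFinset v).filter (fun y => x ≠ y ∧ ¬ G.Adj x y)).card := rfl
  have hD : Dsum G v = ∑ x ∈ G.neighborFinset v,
      ((G.neighborFinset v).filter (fun y => G.Adj x y)).card := rfl
  omega

end counting
section glob
variable (G : SimpleGraph (Fin n)) [DecidableRel G.Adj]

private lemma ite_merge (A B : Prop) [Decidable A] [Decidable B] :
    (if A then (if B then (1:ℕ) else 0) else 0) = if A ∧ B then 1 else 0 := by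
  by_cases hA : A <;> by_cases hB : B <;> simp [hA, hB]

private lemma ite_pull (A : Prop) [Decidable A] (g : Fin n → ℕ) :
    (if A then (∑ y ∈ univ, g y) else 0) = ∑ y ∈ univ, (if A then g y else 0) := by
  split_ifs <;> simp

lemma nbr_filter : ∀ v : Fin n, G.neighborFinset v = univ.filter (fun y => G.Adj v y) := by
  intro v; ext y; simp

lemma Asum_triple (v : Fin n) :
    Asum G v = ∑ x ∈ univ, ∑ y ∈ univ,
      (if G.Adj v x ∧ (G.Adj v y ∧ (x ≠ y ∧ ¬ G.Adj x y)) then 1 else 0) := by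
  rw [Asum, nbr_filter, Finset.sum_filter]
  apply Finset.sum_congr rfl
  intro x _
  rw [Finset.card_filter, Finset.sum_filter, ite_pull]
  apply Finset.sum_congr rfl
  intro y _
  rw [ite_merge, ite_merge]

lemma codeg_triple (x y : Fin n) :
    (codegF G x y).card = ∑ v ∈ univ, (if G.Adj x v ∧ G.Adj y v then 1 else 0) := by
  rw [codegF, Finset.card_filter]

lemma global_identity :
    ∑ v ∈ univ, Asum G v
      = ∑ x ∈ univ, ∑ y ∈ (univ.filter (fun y => x ≠ y ∧ ¬ G.Adj x y)), (codegF G x y).card := by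
  have hR : ∀ x : Fin n, (∑ y ∈ (univ.filter (fun y => x ≠ y ∧ ¬ G.Adj x y)), (codegF G x y).card)
      = ∑ y ∈ univ, ∑ v ∈ univ,
        (if (x ≠ y ∧ ¬ G.Adj x y) ∧ (G.Adj x v ∧ G.Adj y v) then 1 else 0) := by
    intro x
    rw [Finset.sum_filter]
    apply Finset.sum_congr rfl
    intro y _
    rw [codeg_triple, ite_pull]
    apply Finset.sum_congr rfl
    intro v _
    rw [ite_merge]
  have hL : ∑ v ∈ univ, Asum G v = ∑ x ∈ univ, ∑ y ∈ univ, ∑ v ∈ univ,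
      (if G.Adj v x ∧ (G.Adj v y ∧ (x ≠ y ∧ ¬ G.Adj x y)) then 1 else 0) := by
    rw [Finset.sum_congr rfl (fun v _ => Asum_triple G v)]
    rw [Finset.sum_comm]
    apply Finset.sum_congr rfl
    intro x _
    rw [Finset.sum_comm]
  rw [hL, Finset.sum_congr rfl (fun x _ => hR x)]
  apply Finset.sum_congr rfl
  intro x _
  apply Finset.sum_congr rfl
  intro y _
  apply Finset.sum_congr rfl
  intro v _
  apply if_congr _ rfl rfl
  constructor
  · rintro ⟨h1, h2, h3⟩; exact ⟨h3, h1.symm, h2.symm⟩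
  · rintro ⟨h3, h1, h2⟩; exact ⟨h1.symm, h2.symm, h3⟩

end glob
theorem core_bound (G : SimpleGraph (Fin n)) [DecidableRel G.Adj] (t : ℕ) (ht : 2 ≤ t)
    (hind : ¬ HasInducedCopy (completeBipartiteGraph (Fin 2) (Fin (t + 1))) G) :
    G.minDegree * G.minDegree ≤ 2 * n * (G.cliqueNum + t) ^ t := by
  rcases Nat.eq_zero_or_pos n with hn | hn
  · subst hn
    have hd0 : G.minDegree = 0 := by
      simp [SimpleGraph.minDegree]
    simp [hd0]
  haveI : Nonempty (Fin n) := ⟨⟨0, hn⟩⟩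
  set k := G.cliqueNum with hkdef
  set d := G.minDegree with hddef
  set C := (k + t).choose t with hCdef
  have hk1 : 1 ≤ k := by
    have h1 : ({(⟨0, hn⟩ : Fin n)} : Finset (Fin n)).card ≤ k := by
      apply SimpleGraph.IsClique.card_le_cliqueNum
      simp
    simpa using h1
  obtain ⟨κ, hκ⟩ : ∃ κ, k = κ + 1 := ⟨k - 1, by omega⟩
  have hcode : ∀ x y : Fin n, x ≠ y → ¬ G.Adj x y → (codegF G x y).card ≤ C :=
    fun x y hxy hnadj => codeg_le G t hind x y hxy hnadj
  set c₁ := 2 * C + 2 * k with hc₁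
  -- degree is at most n - 1
  have hdn : d + 1 ≤ n := by
    have h1 := G.minDegree_le_degree (⟨0, hn⟩ : Fin n)
    have h2 : G.degree (⟨0, hn⟩ : Fin n) < Fintype.card (Fin n) := G.degree_lt_card_verts _
    rw [Fintype.card_fin] at h2
    omega
  -- per-vertex lower bound on Asum
  have hAv : ∀ v : Fin n, d * (d - c₁) ≤ 2 * Asum G v := by
    intro v
    set f := G.degree v with hf
    have hdf : d ≤ f := G.minDegree_le_degree v
    have hKv : ∀ u ⊆ G.neighborFinset v, G.IsClique (u : Set (Fin n)) → u.card ≤ κ := by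
      intro u hu hc
      have hvnu : v ∉ u := by
        intro hvu
        have := hu hvu
        rw [SimpleGraph.mem_neighborFinset] at this
        exact G.irrefl this
      have hclq : G.IsClique ((insert v u : Finset (Fin n)) : Set (Fin n)) := by
        rw [Finset.coe_insert]
        refine hc.insert ?_
        intro b hb _
        have := hu hb
        rwa [SimpleGraph.mem_neighborFinset] at this
      have hcard := hclq.card_le_cliqueNum
      rw [Finset.card_insert_of_notMem hvnu] at hcard
      omega
    have hDv := local_edge_bound G C κ hcode (G.neighborFinset v) hKv
    rw [G.card_neighborFinset_eq_degree v] at hDv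
    have hD : (∑ z ∈ G.neighborFinset v,
        ((G.neighborFinset v).filter (fun w => G.Adj z w)).card) = Dsum G v := rfl
    rw [hD] at hDv
    have hADf := pervertex_partition G v
    rw [← hf] at hDv hADf
    -- first claim : f * f ≤ 2 * Asum G v + f * c₁
    have claim1 : f * f ≤ 2 * Asum G v + f * c₁ := by
      have hexp : f * (f + 2 * C + 2 * κ) = f * f + f * (2 * C + 2 * κ) := by ring
      have hexp2 : f * c₁ = f * (2 * C + 2 * κ) + 2 * f := by rw [hc₁, hκ]; ring
      rw [hexp] at hDv
      rw [hexp2]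
      set F2 := f * f
      set T := f * (2 * C + 2 * κ)
      omega
    rcases le_or_gt c₁ f with hcf | hcf
    · obtain ⟨e, he⟩ : ∃ e, f = c₁ + e := ⟨f - c₁, by omega⟩
      have hfe : f - c₁ = e := by omega
      have hsplit : f * f = f * e + f * c₁ := by rw [he]; ring
      have h2A : f * e ≤ 2 * Asum G v := by omega
      calc d * (d - c₁) ≤ f * (f - c₁) :=
            Nat.mul_le_mul hdf (Nat.sub_le_sub_right hdf c₁)
        _ = f * e := by rw [hfe]
        _ ≤ 2 * Asum G v := h2A
    · have : d - c₁ = 0 := by omega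
      simp [this]
  -- global upper bound
  have hup : (∑ v ∈ univ, Asum G v) ≤ C * (n * ((n - 1) - d)) := by
    rw [global_identity]
    have hx : ∀ x : Fin n,
        (∑ y ∈ (univ.filter (fun y => x ≠ y ∧ ¬ G.Adj x y)), (codegF G x y).card)
          ≤ C * ((n - 1) - d) := by
      intro x
      have hbadcard : (univ.filter (fun y => x ≠ y ∧ ¬ G.Adj x y)).card ≤ (n - 1) - d := by
        have e1 : (univ.erase x).filter (fun y => G.Adj x y) = G.neighborFinset x := by
          ext y
          simp only [Finset.mem_filter, Finset.mem_erase, Finset.mem_univ, true_and,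
            SimpleGraph.mem_neighborFinset, and_true]
          constructor
          · rintro ⟨_, h⟩; exact h
          · intro h; exact ⟨(G.ne_of_adj h).symm, h⟩
        have e2 : (univ.erase x).filter (fun y => ¬ G.Adj x y)
            = univ.filter (fun y => x ≠ y ∧ ¬ G.Adj x y) := by
          ext y
          simp only [Finset.mem_filter, Finset.mem_erase, Finset.mem_univ, true_and, and_true]
          constructor
          · rintro ⟨h1, h2⟩; exact ⟨Ne.symm h1, h2⟩
          · rintro ⟨h1, h2⟩; exact ⟨Ne.symm h1, h2⟩
        have hsplit := Finset.card_filter_add_card_filter_not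
          (s := univ.erase x) (p := fun y => G.Adj x y)
        rw [e1, e2, Finset.card_erase_of_mem (Finset.mem_univ x), Finset.card_univ,
          Fintype.card_fin] at hsplit
        have hdx : d ≤ G.degree x := G.minDegree_le_degree x
        rw [G.card_neighborFinset_eq_degree x] at hsplit
        omega
      calc (∑ y ∈ (univ.filter (fun y => x ≠ y ∧ ¬ G.Adj x y)), (codegF G x y).card)
          ≤ ∑ y ∈ (univ.filter (fun y => x ≠ y ∧ ¬ G.Adj x y)), C := by
            apply Finset.sum_le_sum
            intro y hy
            rw [Finset.mem_filter] at hy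
            exact hcode x y hy.2.1 hy.2.2
        _ = (univ.filter (fun y => x ≠ y ∧ ¬ G.Adj x y)).card * C := by
            rw [Finset.sum_const, smul_eq_mul]
        _ ≤ ((n - 1) - d) * C := Nat.mul_le_mul_right _ hbadcard
        _ = C * ((n - 1) - d) := Nat.mul_comm _ _
    calc (∑ x ∈ univ, ∑ y ∈ (univ.filter (fun y => x ≠ y ∧ ¬ G.Adj x y)), (codegF G x y).card)
        ≤ ∑ _x ∈ univ, C * ((n-1) - d) := Finset.sum_le_sum (fun x _ => hx x)
      _ = n * (C * ((n-1) - d)) := by rw [Finset.sum_const, smul_eq_mul, Finset.card_univ, Fintype.card_fin]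
      _ = C * (n * ((n-1) - d)) := by ring
  have hlow : n * (d * (d - c₁)) ≤ ∑ v ∈ univ, 2 * Asum G v := by
    have := Finset.card_nsmul_le_sum univ (fun v => 2 * Asum G v) (d * (d - c₁))
      (fun v _ => hAv v)
    rwa [Finset.card_univ, Fintype.card_fin, smul_eq_mul] at this
  have hmain : d * (d - c₁) ≤ 2 * (C * ((n - 1) - d)) := by
    have h1 : (∑ v ∈ univ, 2 * Asum G v) = 2 * ∑ v ∈ univ, Asum G v := by
      rw [Finset.mul_sum]
    have h2 : n * (d * (d - c₁)) ≤ 2 * (C * (n * ((n-1) - d))) := by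
      calc n * (d * (d - c₁)) ≤ ∑ v ∈ univ, 2 * Asum G v := hlow
        _ = 2 * ∑ v ∈ univ, Asum G v := h1
        _ ≤ 2 * (C * (n * ((n-1) - d))) := Nat.mul_le_mul_left _ hup
    have h3 : 2 * (C * (n * ((n-1) - d))) = n * (2 * (C * ((n-1) - d))) := by ring
    rw [h3] at h2
    exact Nat.le_of_mul_le_mul_left h2 hn
  have hkey : C + k ≤ (k + t) ^ t := key_choose k t ht
  rcases le_or_gt c₁ d with hcd | hcd
  · obtain ⟨e, he⟩ : ∃ e, d = c₁ + e := ⟨d - c₁, by omega⟩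
    obtain ⟨u, hu⟩ : ∃ u, n - 1 = d + u := ⟨(n-1) - d, by omega⟩
    have hde : d - c₁ = e := by omega
    rw [hde] at hmain
    have h4 : (n-1) - d = u := by omega
    rw [h4] at hmain
    have hsplit : d * d = d * e + d * c₁ := by rw [he]; ring
    have hstep : d * d ≤ 2 * C * u + 2 * C * d + 2 * k * d := by
      have : d * c₁ = 2 * C * d + 2 * k * d := by rw [hc₁]; ring
      have hde2 : d * e ≤ 2 * C * u := by
        calc d * e = e * d := Nat.mul_comm _ _
          _ ≤ 2 * (C * u) := by
            have : d * e = e * d := Nat.mul_comm _ _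
            omega
          _ = 2 * C * u := by ring
      omega
    have hstep2 : 2 * C * u + 2 * C * d + 2 * k * d ≤ 2 * C * (n-1) + 2 * k * d := by
      have : 2 * C * u + 2 * C * d = 2 * C * (n - 1) := by rw [hu]; ring
      omega
    have hstep3 : 2 * C * (n-1) + 2 * k * d ≤ 2 * n * C + 2 * n * k := by
      have h5 : 2 * C * (n-1) ≤ 2 * n * C := by
        have : (n : ℕ) - 1 ≤ n := Nat.sub_le _ _
        calc 2 * C * (n-1) ≤ 2 * C * n := Nat.mul_le_mul_left _ this
          _ = 2 * n * C := by ring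
      have h6 : 2 * k * d ≤ 2 * n * k := by
        have hd : d ≤ n := by omega
        calc 2 * k * d ≤ 2 * k * n := Nat.mul_le_mul_left _ hd
          _ = 2 * n * k := by ring
      omega
    have hfin : 2 * n * C + 2 * n * k ≤ 2 * n * (k + t) ^ t := by
      have : 2 * n * C + 2 * n * k = 2 * n * (C + k) := by ring
      rw [this]
      exact Nat.mul_le_mul_left _ hkey
    omega
  · have h1 : d * d ≤ d * c₁ := Nat.mul_le_mul_left _ (by omega)
    have h2 : d * c₁ ≤ n * c₁ := Nat.mul_le_mul_right _ (by omega)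
    have h3 : n * c₁ = 2 * n * (C + k) := by rw [hc₁]; ring
    have h4 : 2 * n * (C + k) ≤ 2 * n * (k + t) ^ t := Nat.mul_le_mul_left _ hkey
    omega
/-- **Theorem 3.** Let `t ≥ 2`. If `G` is a graph with `n` vertices, minimum degree `d`,
and no induced `K_{2,t+1}`, then `ω(G) ≥ (d²/(2n)·(1 − 2/n^{1/t}))^{1/t} − t`
(the precise form of `ω(G) ≥ (d²/(2nt)·(1−o(1)))^{1/t} − t`). -/
theorem stmt4 (t : ℕ) (ht : 2 ≤ t) {n : ℕ} (G : SimpleGraph (Fin n))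
    [DecidableRel G.Adj]
    (hind : ¬ HasInducedCopy (completeBipartiteGraph (Fin 2) (Fin (t + 1))) G) :
    ((G.minDegree : ℝ) ^ 2 / (2 * n) * (1 - 2 / (n : ℝ) ^ ((1 : ℝ) / t))) ^ ((1 : ℝ) / t)
      - t ≤ G.cliqueNum := by
  have hcore := core_bound G t ht hind
  set k := G.cliqueNum with hk
  set d := G.minDegree with hd
  have ht0 : (0:ℝ) < (t:ℝ) := by
    have : (0:ℕ) < t := by omega
    exact_mod_cast this
  set base : ℝ := (d : ℝ) ^ 2 / (2 * n) * (1 - 2 / (n : ℝ) ^ ((1 : ℝ) / t)) with hbase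
  have habs : |base| ≤ ((k + t : ℕ) : ℝ) ^ (t : ℕ) := by
    rcases Nat.eq_zero_or_pos n with hn | hn
    · have : base = 0 := by
        rw [hbase, hn]
        push_cast
        rw [mul_zero, div_zero, zero_mul]
      rw [this, abs_zero]
      positivity
    · have hn1 : (1:ℝ) ≤ (n:ℝ) := by exact_mod_cast hn
      have hrp1 : (1:ℝ) ≤ (n : ℝ) ^ ((1 : ℝ) / t) := by
        calc (1:ℝ) = (n:ℝ) ^ (0:ℝ) := by rw [Real.rpow_zero]
          _ ≤ (n : ℝ) ^ ((1 : ℝ) / t) := by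
            apply Real.rpow_le_rpow_of_exponent_le hn1
            positivity
      have hw0 : (0:ℝ) ≤ 2 / (n : ℝ) ^ ((1 : ℝ) / t) := by positivity
      have hw2 : 2 / (n : ℝ) ^ ((1 : ℝ) / t) ≤ 2 := by
        rw [div_le_iff₀ (by linarith)]
        linarith
      have hfac : |(1 - 2 / (n : ℝ) ^ ((1 : ℝ) / t))| ≤ 1 := by
        rw [abs_le]
        constructor <;> linarith
      have hq0 : (0:ℝ) ≤ (d : ℝ) ^ 2 / (2 * n) := by positivity
      have h1 : |base| ≤ (d : ℝ) ^ 2 / (2 * n) := by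
        rw [hbase, abs_mul, abs_of_nonneg hq0]
        nlinarith [hq0]
      have h2 : (d : ℝ) ^ 2 / (2 * n) ≤ ((k + t : ℕ) : ℝ) ^ (t : ℕ) := by
        rw [div_le_iff₀ (by positivity)]
        have hc : ((d * d : ℕ) : ℝ) ≤ ((2 * n * (k + t) ^ t : ℕ) : ℝ) := by exact_mod_cast hcore
        push_cast at hc ⊢
        nlinarith [hc]
      linarith
  have hb1 : base ^ ((1:ℝ)/t) ≤ |base| ^ ((1:ℝ)/t) :=
    le_trans (le_abs_self _) (Real.abs_rpow_le_abs_rpow _ _)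
  have hb2 : |base| ^ ((1:ℝ)/t) ≤ (((k + t : ℕ) : ℝ) ^ (t : ℕ)) ^ ((1:ℝ)/t) :=
    Real.rpow_le_rpow (abs_nonneg _) habs (by positivity)
  have hb3 : (((k + t : ℕ) : ℝ) ^ (t : ℕ)) ^ ((1:ℝ)/t) = ((k + t : ℕ) : ℝ) := by
    rw [← Real.rpow_natCast ((k + t : ℕ) : ℝ) t, ← Real.rpow_mul (by positivity)]
    rw [mul_one_div, div_self (ne_of_gt ht0), Real.rpow_one]
  have hfinal : base ^ ((1:ℝ)/t) ≤ (k : ℝ) + (t : ℝ) := by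
    have := le_trans hb1 (le_trans hb2 (le_of_eq hb3))
    push_cast at this
    linarith
  linarith
end

section
/- Let G be a K_r-free graph. If x_1, ..., x_{m-1} form a clique in G and their common neighborhood has size D > R(r−m+1, s), then the common neighborhood contains at least (D / (2(r+s)^s))^s independent sets of size s. -/
open SimpleGraph Finset

/-- The Ramsey number `R(a,b)`: the least `n` such that every graph on `n` vertices
contains an `a`-clique or an independent set of size `b`. -/
noncomputable def ramsey (a b : ℕ) : ℕ :=
  sInf {n | ∀ G : SimpleGraph (Fin n),
    (∃ S : Finset (Fin n), G.IsNClique a S) ∨ (∃ S : Finset (Fin n), Gᶜ.IsNClique b S)}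

/-- Transport the Ramsey property to subsets of size `n` of any vertex type. -/
lemma aux_transport {a b n : ℕ}
    (h : ∀ H : SimpleGraph (Fin n),
      (∃ S : Finset (Fin n), H.IsNClique a S) ∨ (∃ S : Finset (Fin n), Hᶜ.IsNClique b S))
    {V : Type*} [DecidableEq V] (G : SimpleGraph V) (T : Finset V) (hT : T.card = n) :
    (∃ C : Finset V, C ⊆ T ∧ G.IsNClique a C) ∨
      (∃ C : Finset V, C ⊆ T ∧ Gᶜ.IsNClique b C) := by
  let e : Fin n ≃ {x // x ∈ T} := (T.equivFinOfCardEq hT).symm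
  let f : Fin n → V := fun i => (e i : V)
  have hfT : ∀ i, f i ∈ T := fun i => (e i).2
  have hfinj : Function.Injective f := fun i j hij => e.injective (Subtype.ext hij)
  rcases h (SimpleGraph.comap f G) with ⟨C, hC⟩ | ⟨C, hC⟩
  · left
    refine ⟨C.image f, ?_, ?_, ?_⟩
    · intro x hx; obtain ⟨i, _, rfl⟩ := mem_image.1 hx; exact hfT i
    · rw [isClique_iff]
      intro x hx y hy hxy
      obtain ⟨i, hi, rfl⟩ := mem_image.1 (mem_coe.1 hx)
      obtain ⟨j, hj, rfl⟩ := mem_image.1 (mem_coe.1 hy)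
      have hadj := hC.1 (mem_coe.2 hi) (mem_coe.2 hj) (fun hij => hxy (by rw [hij]))
      rw [SimpleGraph.comap_adj] at hadj
      exact hadj
    · rw [card_image_of_injective _ hfinj]; exact hC.2
  · right
    refine ⟨C.image f, ?_, ?_, ?_⟩
    · intro x hx; obtain ⟨i, _, rfl⟩ := mem_image.1 hx; exact hfT i
    · rw [isClique_iff]
      intro x hx y hy hxy
      obtain ⟨i, hi, rfl⟩ := mem_image.1 (mem_coe.1 hx)
      obtain ⟨j, hj, rfl⟩ := mem_image.1 (mem_coe.1 hy)
      have hadj := hC.1 (mem_coe.2 hi) (mem_coe.2 hj) (fun hij => hxy (by rw [hij]))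
      rw [SimpleGraph.compl_adj] at hadj ⊢
      refine ⟨hxy, ?_⟩
      intro hGadj
      exact hadj.2 (by rw [SimpleGraph.comap_adj]; exact hGadj)
    · rw [card_image_of_injective _ hfinj]; exact hC.2

/-- Ramsey's theorem with the binomial bound. -/
lemma ramsey_thm : ∀ k a b : ℕ, a + b ≤ k →
    ∀ G : SimpleGraph (Fin ((a + b).choose a - 1)),
      (∃ S, G.IsNClique a S) ∨ (∃ S, Gᶜ.IsNClique b S) := by
  intro k
  induction k with
  | zero =>
    intro a b hab G
    have ha : a = 0 := by omega
    subst ha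
    exact Or.inl ⟨∅, by simp⟩
  | succ k ih =>
    intro a b hab G
    rcases Nat.eq_zero_or_pos a with rfl | ha
    · exact Or.inl ⟨∅, by simp⟩
    rcases Nat.eq_zero_or_pos b with rfl | hb
    · exact Or.inr ⟨∅, by simp⟩
    obtain ⟨a', rfl⟩ : ∃ a', a = a' + 1 := ⟨a - 1, by omega⟩
    obtain ⟨b', rfl⟩ : ∃ b', b = b' + 1 := ⟨b - 1, by omega⟩
    classical
    set n1 := (a' + (b' + 1)).choose a' - 1 with hn1
    set n2 := ((a' + 1) + b').choose (a' + 1) - 1 with hn2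
    have hc1 : 0 < (a' + (b' + 1)).choose a' := Nat.choose_pos (by omega)
    have hc2 : 0 < ((a' + 1) + b').choose (a' + 1) := Nat.choose_pos (by omega)
    have hpascal : ((a' + 1) + (b' + 1)).choose (a' + 1)
        = (a' + (b' + 1)).choose a' + ((a' + 1) + b').choose (a' + 1) := by
      have h1 : (a' + 1) + (b' + 1) = (a' + b' + 1) + 1 := by omega
      have h2 : a' + (b' + 1) = a' + b' + 1 := by omega
      have h3 : (a' + 1) + b' = a' + b' + 1 := by omega
      rw [h1, h2, h3, Nat.choose_succ_succ]
    have hn : ((a' + 1) + (b' + 1)).choose (a' + 1) - 1 = n1 + n2 + 1 := by omega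
    have hnpos : 0 < ((a' + 1) + (b' + 1)).choose (a' + 1) - 1 := by omega
    let v : Fin (((a' + 1) + (b' + 1)).choose (a' + 1) - 1) := ⟨0, hnpos⟩
    set Nv := univ.filter (fun u => G.Adj v u) with hNv
    set Mv := univ.filter (fun u => u ≠ v ∧ ¬ G.Adj v u) with hMv
    have hcover : (univ : Finset (Fin (((a' + 1) + (b' + 1)).choose (a' + 1) - 1)))
        ⊆ insert v (Nv ∪ Mv) := by
      intro u _
      by_cases h1 : u = v
      · simp [h1]
      by_cases h2 : G.Adj v u
      · simp [hNv, hMv, h2]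
      · simp [hNv, hMv, h1, h2]
    have hucard : (univ : Finset (Fin (((a' + 1) + (b' + 1)).choose (a' + 1) - 1))).card
        = n1 + n2 + 1 := by
      rw [card_univ, Fintype.card_fin, hn]
    have hle := card_le_card hcover
    have hins := card_insert_le v (Nv ∪ Mv)
    have hun := card_union_le Nv Mv
    have hsplit : n1 ≤ Nv.card ∨ n2 ≤ Mv.card := by omega
    rcases hsplit with hcase | hcase
    · obtain ⟨T, hTsub, hTcard⟩ := Finset.exists_subset_card_eq hcase
      rcases aux_transport (ih a' (b' + 1) (by omega)) G T (by omega) with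
        ⟨C, hCT, hC⟩ | ⟨C, hCT, hC⟩
      · left
        refine ⟨insert v C, hC.insert ?_⟩
        intro u hu
        have hm := hTsub (hCT hu)
        rw [hNv, mem_filter] at hm
        exact hm.2
      · exact Or.inr ⟨C, hC⟩
    · obtain ⟨T, hTsub, hTcard⟩ := Finset.exists_subset_card_eq hcase
      rcases aux_transport (ih (a' + 1) b' (by omega)) G T (by omega) with
        ⟨C, hCT, hC⟩ | ⟨C, hCT, hC⟩
      · exact Or.inl ⟨C, hC⟩
      · right
        refine ⟨insert v C, hC.insert ?_⟩
        intro u hu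
        have hm := hTsub (hCT hu)
        rw [hMv, mem_filter] at hm
        rw [SimpleGraph.compl_adj]
        exact ⟨fun h' => hm.2.1 h'.symm, fun h' => hm.2.2 h'⟩

lemma rset_mem_bound (a b : ℕ) :
    ((a + b).choose a - 1) ∈ {n | ∀ G : SimpleGraph (Fin n),
      (∃ S : Finset (Fin n), G.IsNClique a S) ∨ (∃ S : Finset (Fin n), Gᶜ.IsNClique b S)} :=
  ramsey_thm (a + b) a b le_rfl

lemma ramsey_mem (a b : ℕ) :
    ramsey a b ∈ {n | ∀ G : SimpleGraph (Fin n),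
      (∃ S : Finset (Fin n), G.IsNClique a S) ∨ (∃ S : Finset (Fin n), Gᶜ.IsNClique b S)} :=
  Nat.sInf_mem ⟨_, rset_mem_bound a b⟩

lemma ramsey_le_bound (a b : ℕ) : ramsey a b ≤ (a + b).choose a - 1 :=
  Nat.sInf_le (rset_mem_bound a b)

lemma le_ramsey {a s : ℕ} (ha : 2 ≤ a) : s ≤ ramsey a s := by
  by_contra hcon
  push_neg at hcon
  have hm := ramsey_mem a s
  rcases hm (⊥ : SimpleGraph (Fin (ramsey a s))) with ⟨C, hC⟩ | ⟨C, hC⟩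
  · have h2 : 1 < C.card := by rw [hC.2]; omega
    obtain ⟨x, hx, y, hy, hxy⟩ := Finset.one_lt_card.1 h2
    have := hC.1 (mem_coe.2 hx) (mem_coe.2 hy) hxy
    simpa using this
  · have h3 : C.card ≤ ramsey a s := by
      simpa using Finset.card_le_univ C
    have := hC.2
    omega

/-- `D^k · R^(k) ≤ R^k · D^(k)` for `k ≤ R ≤ D`. -/
lemma aux_desc : ∀ (k R D : ℕ), k ≤ R → R ≤ D →
    D ^ k * R.descFactorial k ≤ R ^ k * D.descFactorial k := by
  intro k
  induction k with
  | zero => intro R D _ _; simp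
  | succ k ih =>
    intro R D hk hRD
    have h1 : D * (R - k) ≤ R * (D - k) := by
      have e1 : D * (R - k) + D * k = D * R := by
        rw [← Nat.mul_add]; congr 1; omega
      have e2 : R * (D - k) + R * k = R * D := by
        rw [← Nat.mul_add]; congr 1; omega
      have e3 : R * k ≤ D * k := Nat.mul_le_mul_right k hRD
      have e4 : D * R = R * D := Nat.mul_comm D R
      omega
    calc D ^ (k + 1) * R.descFactorial (k + 1)
        = (D * (R - k)) * (D ^ k * R.descFactorial k) := by
          rw [pow_succ, Nat.descFactorial_succ]; ring
      _ ≤ (R * (D - k)) * (R ^ k * D.descFactorial k) :=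
          Nat.mul_le_mul h1 (ih R D (by omega) hRD)
      _ = R ^ (k + 1) * D.descFactorial (k + 1) := by
          rw [pow_succ, Nat.descFactorial_succ]; ring

/-- **Lemma.** Let `G` be `K_r`-free. If `x_1,…,x_{m-1}` form a clique whose common
neighborhood has size `D > R(r−m+1, s)`, then that common neighborhood contains at least
`(D/(2(r+s)^s))^s` independent sets of size `s`. -/
theorem stmt10 (r s m : ℕ) (hr : 0 < r) (hs : 0 < s) (hm : 0 < m)
    {n : ℕ} (G : SimpleGraph (Fin n)) [DecidableRel G.Adj]
    (hKr : G.CliqueFree r)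
    (S : Finset (Fin n)) (hS : G.IsNClique (m - 1) S)
    (D : Finset (Fin n)) (hD : D = univ.filter fun v => ∀ x ∈ S, G.Adj x v)
    (hDbig : ramsey (r - m + 1) s < D.card) :
    ((D.card : ℝ) / (2 * (r + s : ℝ) ^ s)) ^ s ≤
      (((D.powersetCard s).filter
        fun T => ∀ x ∈ T, ∀ y ∈ T, ¬ G.Adj x y).card : ℝ) := by
  classical
  have hDadj : ∀ v ∈ D, ∀ x ∈ S, G.Adj x v := by
    intro v hv
    rw [hD] at hv
    exact (mem_filter.1 hv).2
  have hSD : Disjoint S D := by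
    rw [Finset.disjoint_left]
    intro x hxS hxD
    exact G.irrefl (hDadj x hxD x hxS)
  rcases Nat.lt_or_ge m r with hmr | hmr
  swap
  · -- degenerate case `m ≥ r` : contradiction with `K_r`-freeness
    exfalso
    rcases Nat.eq_or_lt_of_le hmr with heq | hlt
    · obtain rfl : m = r := heq.symm
      have hDpos : 0 < D.card := by omega
      obtain ⟨v, hv⟩ := Finset.card_pos.1 hDpos
      have hins : G.IsNClique (m - 1 + 1) (insert v S) :=
        hS.insert (fun x hx => (hDadj v hv x hx).symm)
      rw [Nat.sub_add_cancel hm] at hins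
      exact hKr _ hins
    · have hfree : G.CliqueFree (m - 1) := hKr.mono (by omega)
      exact hfree S hS
  -- main case : m < r
  have ha2 : 2 ≤ r - m + 1 := by omega
  set a := r - m + 1 with haa
  set R := ramsey a s with hRR
  have hsR : s ≤ R := le_ramsey ha2
  have hRD : R < D.card := hDbig
  -- the induced graph on D is K_a-free
  have hKa : ∀ C : Finset (Fin n), C ⊆ D → ¬ G.IsNClique a C := by
    intro C hCD hC
    have hdisj : Disjoint S C := Finset.disjoint_of_subset_right hCD hSD
    have hclique : G.IsNClique r (S ∪ C) := by
      constructor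
      · rw [isClique_iff]
        intro x hx y hy hxy
        simp only [coe_union, Set.mem_union, mem_coe] at hx hy
        rcases hx with hx | hx <;> rcases hy with hy | hy
        · exact hS.1 (mem_coe.2 hx) (mem_coe.2 hy) hxy
        · exact hDadj y (hCD hy) x hx
        · exact (hDadj x (hCD hx) y hy).symm
        · exact hC.1 (mem_coe.2 hx) (mem_coe.2 hy) hxy
      · rw [Finset.card_union_of_disjoint hdisj, hS.2, hC.2]
        omega
    exact hKr _ hclique
  set 𝒩 := (D.powersetCard s).filter (fun T => ∀ x ∈ T, ∀ y ∈ T, ¬ G.Adj x y) with h𝒩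
  -- every R-subset of D contains an independent s-set
  have hP : ∀ T ∈ D.powersetCard R, ∃ I ∈ 𝒩, I ⊆ T := by
    intro T hT
    rw [Finset.mem_powersetCard] at hT
    rcases aux_transport (ramsey_mem a s) G T hT.2 with ⟨C, hCT, hC⟩ | ⟨C, hCT, hC⟩
    · exact absurd hC (hKa C (hCT.trans hT.1))
    · refine ⟨C, ?_, hCT⟩
      rw [h𝒩, mem_filter, Finset.mem_powersetCard]
      refine ⟨⟨hCT.trans hT.1, hC.2⟩, ?_⟩
      intro x hx y hy hadj
      rcases eq_or_ne x y with rfl | hne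
      · exact G.irrefl hadj
      · have hcc := hC.1 (mem_coe.2 hx) (mem_coe.2 hy) hne
        rw [SimpleGraph.compl_adj] at hcc
        exact hcc.2 hadj
  -- double counting
  set f : Finset (Fin n) → Finset (Fin n) :=
    fun T => if h : ∃ I ∈ 𝒩, I ⊆ T then h.choose else ∅ with hf
  have hfspec : ∀ T ∈ D.powersetCard R, f T ∈ 𝒩 ∧ f T ⊆ T := by
    intro T hT
    have h : ∃ I ∈ 𝒩, I ⊆ T := hP T hT
    rw [hf]
    simp only [dif_pos h]
    exact h.choose_spec
  have hfib : ∀ I ∈ 𝒩,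
      ((D.powersetCard R).filter (fun T => f T = I)).card
        ≤ (D.card - s).choose (R - s) := by
    intro I hI
    have hIs : I ⊆ D ∧ I.card = s := by
      have := (mem_filter.1 hI).1
      rwa [Finset.mem_powersetCard] at this
    have key : ∀ T ∈ (D.powersetCard R).filter (fun T => f T = I),
        I ⊆ T ∧ T ⊆ D ∧ T.card = R := by
      intro T hT
      rw [mem_filter] at hT
      have hTp := hT.1
      rw [Finset.mem_powersetCard] at hTp
      have hspec := hfspec T hT.1
      refine ⟨?_, hTp.1, hTp.2⟩
      rw [← hT.2]
      exact hspec.2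
    calc ((D.powersetCard R).filter (fun T => f T = I)).card
        ≤ ((D \ I).powersetCard (R - s)).card := by
          apply Finset.card_le_card_of_injOn (fun T => T \ I)
          · intro T hT
            obtain ⟨hIT, hTD, hTc⟩ := key T hT
            rw [Finset.mem_coe, Finset.mem_powersetCard]
            constructor
            · exact Finset.sdiff_subset_sdiff hTD Finset.Subset.rfl
            · rw [Finset.card_sdiff_of_subset hIT, hTc, hIs.2]
          · intro T1 h1 T2 h2 heq
            obtain ⟨h1I, _, _⟩ := key T1 h1
            obtain ⟨h2I, _, _⟩ := key T2 h2
            have heq' : T1 \ I = T2 \ I := heq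
            rw [← Finset.sdiff_union_of_subset h1I, ← Finset.sdiff_union_of_subset h2I, heq']
      _ = (D.card - s).choose (R - s) := by
          rw [Finset.card_powersetCard, Finset.card_sdiff_of_subset hIs.1, hIs.2]
  have hcount : D.card.choose R ≤ 𝒩.card * ((D.card - s).choose (R - s)) := by
    rw [← Finset.card_powersetCard R D]
    exact (Finset.card_le_mul_card_image_of_maps_to
      (fun T hT => (hfspec T hT).1) _ hfib).trans (le_of_eq (mul_comm _ _))
  have hRle : R ≤ D.card := le_of_lt hRD
  have hchoose_id := Nat.choose_mul (n := D.card) hsR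
  have hpos2 : 0 < (D.card - s).choose (R - s) := Nat.choose_pos (by omega)
  have step1 : D.card.choose s ≤ 𝒩.card * R.choose s := by
    have h5 : D.card.choose s * (D.card - s).choose (R - s)
        ≤ 𝒩.card * R.choose s * ((D.card - s).choose (R - s)) := by
      rw [← hchoose_id]
      calc D.card.choose R * R.choose s
          ≤ (𝒩.card * ((D.card - s).choose (R - s))) * R.choose s :=
            Nat.mul_le_mul_right _ hcount
        _ = 𝒩.card * R.choose s * ((D.card - s).choose (R - s)) := by ring
    exact Nat.le_of_mul_le_mul_right h5 hpos2
  have step2 : D.card.descFactorial s ≤ 𝒩.card * R.descFactorial s := by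
    rw [Nat.descFactorial_eq_factorial_mul_choose, Nat.descFactorial_eq_factorial_mul_choose]
    calc Nat.factorial s * D.card.choose s
        ≤ Nat.factorial s * (𝒩.card * R.choose s) := Nat.mul_le_mul_left _ step1
      _ = 𝒩.card * (Nat.factorial s * R.choose s) := by ring
  have step3 : D.card ^ s * R.descFactorial s
      ≤ (R ^ s * 𝒩.card) * R.descFactorial s := by
    calc D.card ^ s * R.descFactorial s
        ≤ R ^ s * D.card.descFactorial s := aux_desc s R D.card hsR hRle
      _ ≤ R ^ s * (𝒩.card * R.descFactorial s) := Nat.mul_le_mul_left _ step2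
      _ = (R ^ s * 𝒩.card) * R.descFactorial s := by ring
  have hdpos : 0 < R.descFactorial s := by
    rcases Nat.eq_zero_or_pos (R.descFactorial s) with h0 | h0
    · rw [Nat.descFactorial_eq_zero_iff_lt] at h0; omega
    · exact h0
  have step4 : D.card ^ s ≤ R ^ s * 𝒩.card := Nat.le_of_mul_le_mul_right step3 hdpos
  have hRK : R ≤ (r + s) ^ s := by
    have h7 : R ≤ (a + s).choose a - 1 := ramsey_le_bound a s
    have h8 : (a + s).choose a = (a + s).choose s := Nat.choose_symm_add
    have h9 : (a + s).choose s ≤ (a + s) ^ s := Nat.choose_le_pow _ _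
    have h10 : (a + s) ^ s ≤ (r + s) ^ s := Nat.pow_le_pow_left (by omega) s
    omega
  have final : D.card ^ s ≤ (2 * (r + s) ^ s) ^ s * 𝒩.card := by
    calc D.card ^ s ≤ R ^ s * 𝒩.card := step4
      _ ≤ (2 * (r + s) ^ s) ^ s * 𝒩.card :=
          Nat.mul_le_mul_right _ (Nat.pow_le_pow_left (by omega) s)
  rw [div_pow, div_le_iff₀ (by positivity)]
  rw [mul_comm]
  exact_mod_cast final
end

section
/- Let G be a graph on n vertices with no C_{2k+1} subgraph and no induced K_{2,t}, where k ≥ 2 and t ≥ 2. Then for any two distinct non-adjacent vertices x and y of G, the number of their common neighbors is at most (2k−2)(t−1). -/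
open SimpleGraph Finset

private lemma seq_mono {V : Type*} [Preorder V] {m : ℕ} {p : ℕ → V}
    (hseq : ∀ i, i + 1 < m → p i < p (i + 1)) :
    ∀ j, j < m → ∀ i, i < j → p i < p j := by
  intro j
  induction j with
  | zero => omega
  | succ j ih =>
    intro hj i hi
    have hstep : p j < p (j + 1) := hseq j hj
    rcases Nat.lt_succ_iff_lt_or_eq.mp hi with h | h
    · exact lt_trans (ih (by omega) i h) hstep
    · subst h; exact hstep

private lemma pathIndep_card {V : Type*} [LinearOrder V]
    (G : SimpleGraph V) (S : Finset V) (a b : ℕ) (ha : 1 ≤ a)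
    (hpath : ¬ ∃ p : ℕ → V, (∀ i, i < a → p i ∈ S) ∧
      (∀ i, i + 1 < a → p i < p (i + 1) ∧ G.Adj (p i) (p (i + 1))))
    (hindep : ∀ T ⊆ S, T.card = b → ∃ u ∈ T, ∃ v ∈ T, u ≠ v ∧ G.Adj u v) :
    S.card ≤ (a - 1) * (b - 1) := by
  classical
  set Q : ℕ → V → Prop := fun m v => ∃ p : ℕ → V, p (m - 1) = v ∧ (∀ i, i < m → p i ∈ S) ∧
    (∀ i, i + 1 < m → p i < p (i + 1) ∧ G.Adj (p i) (p (i + 1))) with hQdef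
  -- any realized length is at most |S|
  have hcard : ∀ m v, Q m v → m ≤ S.card := by
    rintro m v ⟨p, -, hmem, hseq⟩
    have hmono := seq_mono (m := m) (p := p) (fun i hi => (hseq i hi).1)
    calc m = (Finset.range m).card := (Finset.card_range m).symm
    _ ≤ S.card := by
        apply Finset.card_le_card_of_injOn p
        · intro i hi; exact hmem i (Finset.mem_range.mp hi)
        · intro i hi j hj hij
          simp only [Finset.coe_range, Set.mem_Iio] at hi hj
          by_contra hne
          rcases Nat.lt_or_ge i j with h | h
          · exact absurd hij (ne_of_lt (hmono j hj i h))
          · exact absurd hij.symm (ne_of_lt (hmono i hi j (by omega)))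
  -- any realized length is < a
  have hQa : ∀ m v, Q m v → m < a := by
    rintro m v ⟨p, -, hmem, hseq⟩
    by_contra hge
    exact hpath ⟨p, fun i hi => hmem i (by omega), fun i hi => hseq i (by omega)⟩
  set h : V → ℕ := fun v => Nat.findGreatest (fun m => Q m v) S.card with hhdef
  have hQ1 : ∀ v ∈ S, Q 1 v := by
    intro v hv
    exact ⟨fun _ => v, rfl, fun i _ => hv, fun i hi => absurd hi (by omega)⟩
  have hcard1 : ∀ v ∈ S, 1 ≤ S.card := fun v hv => Finset.card_pos.mpr ⟨v, hv⟩
  have hh1 : ∀ v ∈ S, 1 ≤ h v := by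
    intro v hv
    exact Nat.le_findGreatest (P := fun m => Q m v) (hcard1 v hv) (hQ1 v hv)
  have hQh : ∀ v ∈ S, Q (h v) v := by
    intro v hv
    exact Nat.findGreatest_spec (P := fun m => Q m v) (hcard1 v hv) (hQ1 v hv)
  have hha : ∀ v ∈ S, h v ≤ a - 1 := by
    intro v hv
    have := hQa _ _ (hQh v hv)
    omega
  have hstep : ∀ u ∈ S, ∀ v ∈ S, u < v → G.Adj u v → h u < h v := by
    intro u hu v hv huv hadj
    obtain ⟨p, hend, hmem, hseq⟩ := hQh u hu
    have hm1 : 1 ≤ h u := hh1 u hu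
    set m := h u with hm
    have hQ : Q (m + 1) v := by
      refine ⟨fun i => if i < m then p i else v, ?_, ?_, ?_⟩
      · simp
      · intro i hi
        by_cases hc : i < m
        · simpa [hc] using hmem i hc
        · simpa [hc] using hv
      · intro i hi
        have hil : i < m := by omega
        by_cases hc : i + 1 < m
        · simpa [hil, hc] using hseq i hc
        · have hieq : i = m - 1 := by omega
          have hpi : p i = u := by rw [hieq]; exact hend
          simp only [if_pos hil, if_neg hc, hpi]
          exact ⟨huv, hadj⟩
    have hle : m + 1 ≤ S.card := hcard _ _ hQ
    have : m + 1 ≤ h v := Nat.le_findGreatest (P := fun m => Q m v) hle hQ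
    omega
  set L : ℕ → Finset V := fun j => S.filter (fun v => h v = j) with hLdef
  have hLcard : ∀ j, (L j).card ≤ b - 1 := by
    intro j
    by_contra hc
    push_neg at hc
    obtain ⟨T, hTL, hTcard⟩ := Finset.exists_subset_card_eq (s := L j) (n := b) (by omega)
    obtain ⟨u, hu, v, hv, huv, hadjuv⟩ :=
      hindep T (hTL.trans (Finset.filter_subset _ _)) hTcard
    have hu' := Finset.mem_filter.mp (hTL hu)
    have hv' := Finset.mem_filter.mp (hTL hv)
    rcases huv.lt_or_gt with h1 | h1
    · have := hstep u hu'.1 v hv'.1 h1 hadjuv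
      omega
    · have := hstep v hv'.1 u hu'.1 h1 hadjuv.symm
      omega
  have hsub : S ⊆ (Finset.Icc 1 (a - 1)).biUnion L := by
    intro v hv
    rw [Finset.mem_biUnion]
    exact ⟨h v, Finset.mem_Icc.mpr ⟨hh1 v hv, hha v hv⟩,
      Finset.mem_filter.mpr ⟨hv, rfl⟩⟩
  calc S.card ≤ ((Finset.Icc 1 (a - 1)).biUnion L).card := Finset.card_le_card hsub
  _ ≤ ∑ j ∈ Finset.Icc 1 (a - 1), (L j).card := Finset.card_biUnion_le
  _ ≤ ∑ _j ∈ Finset.Icc 1 (a - 1), (b - 1) := Finset.sum_le_sum (fun j _ => hLcard j)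
  _ = (a - 1) * (b - 1) := by
      rw [Finset.sum_const, Nat.card_Icc, smul_eq_mul]
      congr 1
open SimpleGraph Finset

/-- If `G` has no `C_{2k+1}` subgraph and no induced `K_{2,t}` (`k,t ≥ 2`), then any two
distinct non-adjacent vertices have at most `(2k−2)(t−1)` common neighbors. -/
theorem stmt12 (k t : ℕ) (hk : 2 ≤ k) (ht : 2 ≤ t)
    {n : ℕ} (G : SimpleGraph (Fin n)) [DecidableRel G.Adj]
    (hC : ¬ HasCopy (cycleGraph (2 * k + 1)) G)
    (hind : ¬ HasInducedCopy (completeBipartiteGraph (Fin 2) (Fin t)) G)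
    (x y : Fin n) (hxy : x ≠ y) (hadj : ¬ G.Adj x y) :
    (univ.filter fun v => G.Adj x v ∧ G.Adj y v).card ≤ (2 * k - 2) * (t - 1) := by
  classical
  set S : Finset (Fin n) := univ.filter fun v => G.Adj x v ∧ G.Adj y v with hSdef
  have hmemS : ∀ v, v ∈ S ↔ G.Adj x v ∧ G.Adj y v := by
    intro v; simp [hSdef]
  -- no increasing path on `2k-1` vertices inside `S`
  have hpath : ¬ ∃ p : ℕ → Fin n, (∀ i, i < 2 * k - 1 → p i ∈ S) ∧
      (∀ i, i + 1 < 2 * k - 1 → p i < p (i + 1) ∧ G.Adj (p i) (p (i + 1))) := by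
    rintro ⟨p, hmem, hseq⟩
    apply hC
    have hxp : ∀ i, i < 2 * k - 1 → G.Adj x (p i) := fun i hi => ((hmemS _).mp (hmem i hi)).1
    have hyp : ∀ i, i < 2 * k - 1 → G.Adj y (p i) := fun i hi => ((hmemS _).mp (hmem i hi)).2
    have hmono := seq_mono (m := 2 * k - 1) (p := p) (fun i hi => (hseq i hi).1)
    have pinj : ∀ i j, i < 2 * k - 1 → j < 2 * k - 1 → p i = p j → i = j := by
      intro i j hi hj hij
      by_contra hne
      rcases Nat.lt_or_ge i j with h | h
      · exact absurd hij (ne_of_lt (hmono j hj i h))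
      · exact absurd hij.symm (ne_of_lt (hmono i hi j (by omega)))
    set f : Fin (2 * k + 1) → Fin n := fun j =>
      if j.val = 0 then x else if j.val = 2 then y else p (j.val - 2) with hfdef
    have hfx : ∀ j : Fin (2 * k + 1), j.val = 0 → f j = x := by
      intro j hj; rw [hfdef]; dsimp only; rw [if_pos hj]
    have hfy : ∀ j : Fin (2 * k + 1), j.val = 2 → f j = y := by
      intro j hj; rw [hfdef]; dsimp only; rw [if_neg (by omega), if_pos hj]
    have hfp : ∀ j : Fin (2 * k + 1), j.val ≠ 0 → j.val ≠ 2 → f j = p (j.val - 2) := by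
      intro j h1 h2; rw [hfdef]; dsimp only; rw [if_neg h1, if_neg h2]
    have hidx : ∀ j : Fin (2 * k + 1), j.val ≠ 0 → j.val ≠ 2 → j.val - 2 < 2 * k - 1 := by
      intro j h1 h2; have := j.isLt; omega
    have hxnep : ∀ i, i < 2 * k - 1 → x ≠ p i := fun i hi => G.ne_of_adj (hxp i hi)
    have hynep : ∀ i, i < 2 * k - 1 → y ≠ p i := fun i hi => G.ne_of_adj (hyp i hi)
    refine ⟨f, ?_, ?_⟩
    · -- injectivity
      intro a b hab
      have hA := a.isLt
      have hB := b.isLt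
      apply Fin.ext
      by_cases ha0 : a.val = 0
      · by_cases hb0 : b.val = 0
        · omega
        · by_cases hb2 : b.val = 2
          · rw [hfx a ha0, hfy b hb2] at hab; exact absurd hab hxy
          · rw [hfx a ha0, hfp b hb0 hb2] at hab
            exact absurd hab (hxnep _ (hidx b hb0 hb2))
      · by_cases ha2 : a.val = 2
        · by_cases hb0 : b.val = 0
          · rw [hfy a ha2, hfx b hb0] at hab; exact absurd hab.symm hxy
          · by_cases hb2 : b.val = 2
            · omega
            · rw [hfy a ha2, hfp b hb0 hb2] at hab
              exact absurd hab (hynep _ (hidx b hb0 hb2))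
        · by_cases hb0 : b.val = 0
          · rw [hfp a ha0 ha2, hfx b hb0] at hab
            exact absurd hab.symm (hxnep _ (hidx a ha0 ha2))
          · by_cases hb2 : b.val = 2
            · rw [hfp a ha0 ha2, hfy b hb2] at hab
              exact absurd hab.symm (hynep _ (hidx a ha0 ha2))
            · rw [hfp a ha0 ha2, hfp b hb0 hb2] at hab
              have := pinj _ _ (hidx a ha0 ha2) (hidx b hb0 hb2) hab
              omega
    · -- adjacency
      have hnext : ∀ u v : Fin (2 * k + 1), v.val = (u.val + 1) % (2 * k + 1) →
          G.Adj (f u) (f v) := by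
        intro u v hv
        have hu := u.isLt
        by_cases hu2k : u.val = 2 * k
        · have h1 : u.val + 1 = 2 * k + 1 := by omega
          rw [h1, Nat.mod_self] at hv
          rw [hfx v hv, hfp u (by omega) (by omega)]
          exact (hxp (u.val - 2) (by omega)).symm
        · have hvval : v.val = u.val + 1 := by
            rw [hv, Nat.mod_eq_of_lt (by omega)]
          by_cases h0 : u.val = 0
          · rw [hfx u h0, hfp v (by omega) (by omega)]
            have h2 : v.val - 2 = 0 := by omega
            rw [h2]; exact hxp 0 (by omega)
          · by_cases h1 : u.val = 1
            · rw [hfp u (by omega) (by omega), hfy v (by omega)]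
              have h2 : u.val - 2 = 0 := by omega
              rw [h2]; exact (hyp 0 (by omega)).symm
            · by_cases h2 : u.val = 2
              · rw [hfy u h2, hfp v (by omega) (by omega)]
                have h3 : v.val - 2 = 1 := by omega
                rw [h3]; exact hyp 1 (by omega)
              · rw [hfp u h0 h2, hfp v (by omega) (by omega)]
                have he : v.val - 2 = (u.val - 2) + 1 := by omega
                rw [he]
                exact (hseq (u.val - 2) (by omega)).2
      have hsub1 : ∀ u v : Fin (2 * k + 1), (v - u).val = 1 →
          v.val = (u.val + 1) % (2 * k + 1) := by
        intro u v h
        have hone : (1 : Fin (2 * k + 1)).val = 1 := by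
          rw [Fin.val_one']
          exact Nat.mod_eq_of_lt (by omega)
        have hvu : v - u = (1 : Fin (2 * k + 1)) := Fin.ext (by rw [h, hone])
        have hv : v = u + 1 := by
          rwa [sub_eq_iff_eq_add'] at hvu
        rw [hv, Fin.val_add, hone]
      intro a b hab
      rcases cycleGraph_adj'.mp hab with h | h
      · exact (hnext b a (hsub1 b a h)).symm
      · exact hnext a b (hsub1 a b h)
  -- no independent set of size `t` inside `S`
  have hindep : ∀ T ⊆ S, T.card = t → ∃ u ∈ T, ∃ v ∈ T, u ≠ v ∧ G.Adj u v := by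
    intro T hTS hTcard
    by_contra hno
    push_neg at hno
    apply hind
    set e : Fin t ↪o Fin n := T.orderEmbOfFin hTcard with hedef
    have heT : ∀ i, e i ∈ T := fun i => Finset.orderEmbOfFin_mem T hTcard i
    have heS : ∀ i, G.Adj x (e i) ∧ G.Adj y (e i) := fun i => (hmemS _).mp (hTS (heT i))
    set F : Fin 2 ⊕ Fin t → Fin n :=
      Sum.elim (fun i => if i = 0 then x else y) (fun i => e i) with hFdef
    have hxne : ∀ i, x ≠ e i := fun i => G.ne_of_adj (heS i).1
    have hyne : ∀ i, y ≠ e i := fun i => G.ne_of_adj (heS i).2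
    have hadj2 : ¬ G.Adj y x := fun h => hadj h.symm
    have htwo : ∀ i : Fin 2, i = 0 ∨ i = 1 := by decide
    have hF0 : F (Sum.inl 0) = x := by simp [hFdef]
    have hF1 : F (Sum.inl 1) = y := by simp [hFdef]
    have hFr : ∀ i, F (Sum.inr i) = e i := fun i => rfl
    have hFinj : Function.Injective F := by
      rintro (i | i) (j | j) hab
      · rcases htwo i with rfl | rfl <;> rcases htwo j with rfl | rfl
        · rfl
        · rw [hF0, hF1] at hab; exact absurd hab hxy
        · rw [hF1, hF0] at hab; exact absurd hab.symm hxy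
        · rfl
      · exfalso
        rcases htwo i with rfl | rfl
        · rw [hF0, hFr] at hab; exact hxne j hab
        · rw [hF1, hFr] at hab; exact hyne j hab
      · exfalso
        rcases htwo j with rfl | rfl
        · rw [hF0, hFr] at hab; exact hxne i hab.symm
        · rw [hF1, hFr] at hab; exact hyne i hab.symm
      · rw [hFr, hFr] at hab
        rw [e.injective hab]
    refine ⟨⟨⟨F, hFinj⟩, ?_⟩⟩
    intro a b
    simp only [Function.Embedding.coeFn_mk]
    obtain (i | i) := a <;> obtain (j | j) := b
    · refine iff_of_false ?_ (by simp)
      intro h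
      rcases htwo i with rfl | rfl <;> rcases htwo j with rfl | rfl
      · rw [hF0] at h; exact G.loopless.irrefl _ h
      · rw [hF0, hF1] at h; exact hadj h
      · rw [hF1, hF0] at h; exact hadj2 h
      · rw [hF1] at h; exact G.loopless.irrefl _ h
    · refine iff_of_true ?_ (by simp)
      rcases htwo i with rfl | rfl
      · rw [hF0, hFr]; exact (heS j).1
      · rw [hF1, hFr]; exact (heS j).2
    · refine iff_of_true ?_ (by simp)
      rcases htwo j with rfl | rfl
      · rw [hF0, hFr]; exact ((heS i).1).symm
      · rw [hF1, hFr]; exact ((heS i).2).symm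
    · refine iff_of_false ?_ (by simp)
      intro h
      rw [hFr, hFr] at h
      by_cases hij : i = j
      · subst hij; exact G.loopless.irrefl _ h
      · exact hno (e i) (heT i) (e j) (heT j) (fun hh => hij (e.injective hh)) h
  have key := pathIndep_card G S (2 * k - 1) t (by omega) hpath hindep
  calc S.card ≤ (2 * k - 1 - 1) * (t - 1) := key
  _ = (2 * k - 2) * (t - 1) := by congr 1
end

section
/- Let a, r, s be positive integers and G a graph with n vertices and average degree d. If there is a positive integer t such that d^t/n^{t-1} − binom(n,s)·(r/n)^t ≥ a, then G contains a subset A of at least a vertices such that every set of s vertices in A has at least r common neighbors. -/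
open SimpleGraph Finset

/-- Deletion step: if `A` has at least `a` more vertices than it has "bad" `s`-subsets,
then deleting one vertex from each bad subset leaves a set of size at least `a`
with no bad subsets. -/
lemma delete_bad_aux {V : Type*} [DecidableEq V] (Nc : Finset V → ℕ) (a r s : ℕ)
    (hs : 0 < s) :
    ∀ (k : ℕ) (A : Finset V),
      ((A.powersetCard s).filter fun S => Nc S < r).card = k →
      a + ((A.powersetCard s).filter fun S => Nc S < r).card ≤ A.card →
      ∃ B : Finset V, a ≤ B.card ∧ ∀ S ⊆ B, S.card = s → r ≤ Nc S := by
  intro k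
  induction k using Nat.strong_induction_on with
  | _ k ih =>
    intro A hk hA
    rcases Nat.eq_zero_or_pos k with rfl | hkpos
    · refine ⟨A, by omega, fun S hS hScard => ?_⟩
      by_contra hlt
      push_neg at hlt
      have : S ∈ (A.powersetCard s).filter fun S => Nc S < r := by
        simp [Finset.mem_powersetCard, hS, hScard, hlt]
      rw [Finset.card_eq_zero] at hk
      simp [hk] at this
    · -- there is a bad subset S; remove one of its vertices
      have hne : ((A.powersetCard s).filter fun S => Nc S < r).Nonempty := by
        rw [← Finset.card_pos, hk]; exact hkpos
      obtain ⟨S, hS⟩ := hne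
      rw [Finset.mem_filter, Finset.mem_powersetCard] at hS
      obtain ⟨⟨hSA, hScard⟩, hSbad⟩ := hS
      have hSne : S.Nonempty := by rw [← Finset.card_pos, hScard]; exact hs
      obtain ⟨x, hx⟩ := hSne
      have hxA : x ∈ A := hSA hx
      set A' := A.erase x with hA'
      have hsub : ((A'.powersetCard s).filter fun S => Nc S < r) ⊆
          ((A.powersetCard s).filter fun S => Nc S < r).erase S := by
        intro S' hS'
        rw [Finset.mem_filter, Finset.mem_powersetCard] at hS'
        obtain ⟨⟨hS'A, hS'card⟩, hS'bad⟩ := hS'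
        rw [Finset.mem_erase]
        constructor
        · intro hEq
          subst hEq
          exact (Finset.mem_erase.mp (hS'A hx)).1 rfl
        · rw [Finset.mem_filter, Finset.mem_powersetCard]
          exact ⟨⟨hS'A.trans (Finset.erase_subset _ _), hS'card⟩, hS'bad⟩
      have hcardsub :
          ((A'.powersetCard s).filter fun S => Nc S < r).card ≤ k - 1 := by
        calc _ ≤ (((A.powersetCard s).filter fun S => Nc S < r).erase S).card :=
              Finset.card_le_card hsub
          _ = k - 1 := by
              rw [Finset.card_erase_of_mem, hk]
              rw [Finset.mem_filter, Finset.mem_powersetCard]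
              exact ⟨⟨hSA, hScard⟩, hSbad⟩
      have hA'card : A'.card = A.card - 1 := Finset.card_erase_of_mem hxA
      exact ih _ (by omega) A' rfl (by omega)

/-- **Dependent random choice.** Let `a, r, s` be positive integers and `G` a graph with
`n` vertices and average degree `d`. If there is a positive integer `t` with
`d^t/n^{t-1} − C(n,s)·(r/n)^t ≥ a`, then `G` contains a set `A` of at least `a` vertices
such that every `s` vertices of `A` have at least `r` common neighbors. -/
theorem stmt14 (a r s : ℕ) (ha : 0 < a) (hr : 0 < r) (hs : 0 < s)
    {n : ℕ} (G : SimpleGraph (Fin n)) [DecidableRel G.Adj]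
    (d : ℝ) (hd : d = 2 * (G.edgeFinset.card : ℝ) / n)
    (t : ℕ) (ht : 0 < t)
    (h : (a : ℝ) ≤ d ^ t / (n : ℝ) ^ (t - 1) - (n.choose s : ℝ) * ((r : ℝ) / n) ^ t) :
    ∃ A : Finset (Fin n), a ≤ A.card ∧
      ∀ S ⊆ A, S.card = s → r ≤ (univ.filter fun v => ∀ x ∈ S, G.Adj x v).card := by
  classical
  obtain ⟨u, rfl⟩ : ∃ u, t = u + 1 := ⟨t - 1, (Nat.succ_pred_eq_of_pos ht).symm⟩
  set t := u + 1
  -- dispose of the degenerate case n = 0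
  rcases Nat.eq_zero_or_pos n with rfl | hn
  · exfalso
    have hd0 : d = 0 := by simp [hd]
    have hch : (Nat.choose 0 s : ℝ) = 0 := by
      rw [Nat.choose_eq_zero_of_lt hs]; simp
    rw [hd0, hch] at h
    simp only [Nat.cast_zero, zero_mul, sub_zero, zero_pow (Nat.succ_ne_zero u),
      zero_div] at h
    have : (1 : ℝ) ≤ (a : ℝ) := by exact_mod_cast ha
    rw [show (0:ℝ) ^ t = 0 from zero_pow (Nat.succ_ne_zero u), zero_div] at h
    linarith
  have hn' : (0 : ℝ) < n := by exact_mod_cast hn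
  -- common neighborhood
  set N : Finset (Fin n) → Finset (Fin n) :=
    fun S => univ.filter fun v => ∀ x ∈ S, G.Adj x v with hNdef
  -- the common neighborhood of a tuple T
  set A : (Fin t → Fin n) → Finset (Fin n) :=
    fun T => univ.filter fun v => ∀ i, G.Adj (T i) v with hAdef
  -- the globally bad s-sets
  set badAll : Finset (Finset (Fin n)) :=
    ((univ : Finset (Fin n)).powersetCard s).filter fun S => (N S).card < r with hbadAll
  -- Step 1 : ∑_T |A T| = ∑_v deg(v)^t
  have key1 : ∑ T : Fin t → Fin n, (A T).card = ∑ v : Fin n, (G.degree v) ^ t := by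
    have : ∀ T, (A T).card = ∑ v : Fin n, if (∀ i, G.Adj (T i) v) then 1 else 0 := by
      intro T
      rw [hAdef, Finset.card_filter]
    simp only [this]
    rw [Finset.sum_comm]
    refine Finset.sum_congr rfl fun v _ => ?_
    have : (∑ T : Fin t → Fin n, if (∀ i, G.Adj (T i) v) then 1 else 0) =
        (univ.filter fun T : Fin t → Fin n => ∀ i, T i ∈ G.neighborFinset v).card := by
      rw [Finset.card_filter]
      refine Finset.sum_congr rfl fun T _ => ?_
      congr 1
      simp only [eq_iff_iff, mem_neighborFinset]
      constructor
      · intro hh i; exact (hh i).symm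
      · intro hh i; exact (hh i).symm
    rw [this]
    have : (univ.filter fun T : Fin t → Fin n => ∀ i, T i ∈ G.neighborFinset v) =
        Fintype.piFinset fun _ : Fin t => G.neighborFinset v := by
      ext T
      rw [Finset.mem_filter, Fintype.mem_piFinset]
      simp only [Finset.mem_univ, true_and]
    rw [this, Fintype.card_piFinset, Finset.prod_const, Finset.card_univ,
      Fintype.card_fin]
    rfl
  -- Step 2 : the number of tuples whose common neighborhood contains S
  have key2 : ∀ S : Finset (Fin n),
      (univ.filter fun T : Fin t → Fin n => S ⊆ A T).card = (N S).card ^ t := by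
    intro S
    have : (univ.filter fun T : Fin t → Fin n => S ⊆ A T) =
        Fintype.piFinset fun _ : Fin t => N S := by
      ext T
      rw [Finset.mem_filter, Fintype.mem_piFinset]
      simp only [Finset.mem_univ, true_and, hNdef, hAdef, Finset.subset_iff,
        Finset.mem_filter]
      constructor
      · intro hh i x hx
        exact (hh hx i).symm
      · intro hh x hx i
        exact (hh i x hx).symm
    rw [this, Fintype.card_piFinset]
    simp
  -- Step 3 : ∑_T (#bad subsets of A T) = ∑_{S bad} |N S|^t
  have key3 : ∑ T : Fin t → Fin n,
      (((A T).powersetCard s).filter fun S => (N S).card < r).card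
      = ∑ S ∈ badAll, (N S).card ^ t := by
    have heq : ∀ T, ((A T).powersetCard s).filter (fun S => (N S).card < r)
        = badAll.filter fun S => S ⊆ A T := by
      intro T
      ext S
      simp only [Finset.mem_filter, Finset.mem_powersetCard, hbadAll,
        Finset.subset_univ, true_and]
      tauto
    simp only [heq]
    have : ∀ T, (badAll.filter fun S => S ⊆ A T).card
        = ∑ S ∈ badAll, if S ⊆ A T then 1 else 0 := fun T => Finset.card_filter _ _
    simp only [this]
    rw [Finset.sum_comm]
    refine Finset.sum_congr rfl fun S _ => ?_
    rw [← key2 S, Finset.card_filter]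
  -- Step 3' : bound the bad sum
  have key3' : ∑ S ∈ badAll, (N S).card ^ t ≤ n.choose s * r ^ t := by
    calc ∑ S ∈ badAll, (N S).card ^ t ≤ ∑ _S ∈ badAll, r ^ t := by
          refine Finset.sum_le_sum fun S hS => ?_
          rw [hbadAll, Finset.mem_filter] at hS
          exact Nat.pow_le_pow_left (le_of_lt hS.2) t
      _ = badAll.card * r ^ t := by rw [Finset.sum_const, smul_eq_mul]
      _ ≤ n.choose s * r ^ t := by
          refine Nat.mul_le_mul_right _ ?_
          calc badAll.card ≤ ((univ : Finset (Fin n)).powersetCard s).card :=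
                Finset.card_le_card (Finset.filter_subset _ _)
            _ = n.choose s := by rw [Finset.card_powersetCard]; simp
  -- Step 4 : Jensen to bound ∑ deg^t from below
  have key4 : (n : ℝ) * d ^ t ≤ ∑ v : Fin n, (G.degree v : ℝ) ^ t := by
    have hjensen := pow_sum_div_card_le_sum_pow
      (s := (univ : Finset (Fin n))) (f := fun v => (G.degree v : ℝ))
      (fun i _ => by positivity) u
    have hsumdeg : ∑ v : Fin n, (G.degree v : ℝ) = 2 * (G.edgeFinset.card : ℝ) := by
      rw [← Nat.cast_sum]
      exact_mod_cast congrArg (Nat.cast (R := ℝ)) (G.sum_degrees_eq_twice_card_edges)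
    rw [hsumdeg] at hjensen
    simp only [Finset.card_univ, Fintype.card_fin] at hjensen
    calc (n : ℝ) * d ^ t = (2 * (G.edgeFinset.card : ℝ)) ^ (u + 1) / (n : ℝ) ^ u := by
          rw [hd]; simp only [t]; rw [div_pow, pow_succ (n:ℝ) u]; field_simp
      _ ≤ ∑ v : Fin n, (G.degree v : ℝ) ^ t := hjensen
  -- Combine: the expected value of |A T| - #bad(T) is at least a
  have havg : (∑ T : Fin t → Fin n, ((a : ℝ)))
      ≤ ∑ T : Fin t → Fin n, (((A T).card : ℝ) -
          ((((A T).powersetCard s).filter fun S => (N S).card < r).card : ℝ)) := by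
    rw [Finset.sum_sub_distrib]
    have h1 : ∑ T : Fin t → Fin n, ((A T).card : ℝ)
        = ∑ v : Fin n, (G.degree v : ℝ) ^ t := by
      rw [← Nat.cast_sum]
      rw [key1]
      push_cast
      ring
    have h2 : ∑ T : Fin t → Fin n,
        (((((A T).powersetCard s).filter fun S => (N S).card < r).card : ℝ))
        ≤ (n.choose s : ℝ) * (r : ℝ) ^ t := by
      rw [← Nat.cast_sum, key3]
      calc ((∑ S ∈ badAll, (N S).card ^ t : ℕ) : ℝ)
          ≤ ((n.choose s * r ^ t : ℕ) : ℝ) := by exact_mod_cast key3'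
        _ = (n.choose s : ℝ) * (r : ℝ) ^ t := by push_cast; ring
    have hconst : (∑ _T : Fin t → Fin n, ((a : ℝ))) = (n : ℝ) ^ t * a := by
      rw [Finset.sum_const, Finset.card_univ]
      simp [Fintype.card_fun]
    rw [hconst, h1]
    have hmul : (n : ℝ) ^ t * (a : ℝ) ≤ (n : ℝ) ^ t *
        (d ^ t / (n : ℝ) ^ (t - 1) - (n.choose s : ℝ) * ((r : ℝ) / n) ^ t) :=
      mul_le_mul_of_nonneg_left h (by positivity)
    have hexp : (n : ℝ) ^ t *
        (d ^ t / (n : ℝ) ^ (t - 1) - (n.choose s : ℝ) * ((r : ℝ) / n) ^ t)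
        = (n : ℝ) * d ^ t - (n.choose s : ℝ) * (r : ℝ) ^ t := by
      have : t - 1 = u := rfl
      rw [this, div_pow]
      have hne : (n : ℝ) ≠ 0 := ne_of_gt hn'
      field_simp
      ring
    rw [hexp] at hmul
    linarith
  -- pick a good tuple T
  haveI : Nonempty (Fin n) := ⟨⟨0, hn⟩⟩
  have hnonempty : (univ : Finset (Fin t → Fin n)).Nonempty := Finset.univ_nonempty
  obtain ⟨T, _, hT⟩ := Finset.exists_le_of_sum_le hnonempty havg
  -- convert to a natural-number inequality
  have hTnat : a + (((A T).powersetCard s).filter fun S => (N S).card < r).card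
      ≤ (A T).card := by
    have : ((a + (((A T).powersetCard s).filter fun S => (N S).card < r).card : ℕ) : ℝ)
        ≤ ((A T).card : ℝ) := by push_cast; linarith
    exact_mod_cast this
  -- delete a vertex from each bad subset
  obtain ⟨B, hB1, hB2⟩ := delete_bad_aux (fun S => (N S).card) a r s hs _ (A T) rfl hTnat
  exact ⟨B, hB1, hB2⟩
end
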